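/- arXiv:1912.10324 — 7 statements merged into one kernel-verified Lean document; each statement's English description precedes it below -/
import Mathlib

section
/- Let n, k, r be integers with r ≥ 2, k ≥ 1 and 2k ≤ n, and let 𝒲 = {W ∈ 𝒮_{n,k,r} : (1,1) ∈ W}. Then for every intersecting family 𝒜 ⊆ 𝒮_{n,k,r} there exists an injection from 𝒜 into 𝒲; in particular |𝒜| ≤ |𝒲| = r^(k−1) · C(n−1, k−1). -/
open Finset

/-- The family of `r`-signed `k`-sets on `[n] = {1, …, n}`. -/
def signedSets (n k r : ℕ) : Finset (Finset (ℕ × ℕ)) :=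
  ((Finset.Icc 1 n ×ˢ Finset.Icc 1 r).powerset).filter
    (fun A => A.card = k ∧ (A.image Prod.fst).card = k)

/-- The star `𝒲` of all `r`-signed `k`-sets on `[n]` containing the pair `(1, 1)`. -/
def signedStar (n k r : ℕ) : Finset (Finset (ℕ × ℕ)) :=
  (signedSets n k r).filter (fun W => (1, 1) ∈ W)

/-- value of a graph-like finset at x -/
def valAt (A : Finset (ℕ × ℕ)) (x : ℕ) : ℕ := (A.filter (fun p => p.1 = x)).sum Prod.snd

lemma filter_fst_eq (A : Finset (ℕ × ℕ)) (hinj : Set.InjOn Prod.fst (A : Set (ℕ × ℕ))) {x a : ℕ}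
    (h : (x, a) ∈ A) : A.filter (fun p => p.1 = x) = {(x, a)} := by
  ext p
  simp only [mem_filter, mem_singleton]
  constructor
  · rintro ⟨hp, hpx⟩
    exact hinj hp h (by simpa using hpx)
  · rintro rfl; exact ⟨h, rfl⟩

lemma valAt_eq (A : Finset (ℕ × ℕ)) (hinj : Set.InjOn Prod.fst (A : Set (ℕ × ℕ))) {x a : ℕ}
    (h : (x, a) ∈ A) : valAt A x = a := by
  rw [valAt, filter_fst_eq A hinj h, Finset.sum_singleton]

lemma mem_valAt (A : Finset (ℕ × ℕ)) (hinj : Set.InjOn Prod.fst (A : Set (ℕ × ℕ))) {x : ℕ}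
    (hx : x ∈ A.image Prod.fst) : (x, valAt A x) ∈ A := by
  obtain ⟨p, hp, rfl⟩ := mem_image.1 hx
  rw [valAt_eq A hinj (show (p.1, p.2) ∈ A from hp)]
  exact hp

lemma injOn_of_card (A : Finset (ℕ × ℕ)) (h : (A.image Prod.fst).card = A.card) :
    Set.InjOn Prod.fst (A : Set (ℕ × ℕ)) := Finset.card_image_iff.1 h

/-- counting graphs over a fixed support -/
lemma graphCard (S : Finset ℕ) (r : ℕ) :
    (((S ×ˢ Finset.Icc 1 r).powerset).filter
      (fun A => A.image Prod.fst = S ∧ A.card = S.card)).card = r ^ S.card := by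
  rw [show r ^ S.card = (S.pi (fun _ => Finset.Icc 1 r)).card by
    rw [Finset.card_pi]; simp [Finset.prod_const]]
  apply Finset.card_bij' (fun A _ => fun x (_ : x ∈ S) => valAt A x)
    (fun f _ => S.attach.image (fun x => (x.1, f x.1 x.2)))
  · -- hi : maps into pi
    intro A hA
    simp only [mem_filter, mem_powerset] at hA
    obtain ⟨hsub, himg, hcard⟩ := hA
    have hinj : Set.InjOn Prod.fst (A : Set (ℕ × ℕ)) :=
      injOn_of_card A (by rw [himg, hcard])
    rw [Finset.mem_pi]
    intro x hx
    have := mem_valAt A hinj (by rw [himg]; exact hx)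
    have := hsub this
    exact (Finset.mem_product.1 this).2
  · -- hj : maps into filter
    intro f hf
    simp only [mem_filter, mem_powerset]
    have hginj : Function.Injective (fun x : {y // y ∈ S} => (x.1, f x.1 x.2)) := by
      intro x y hxy
      exact Subtype.ext (congrArg Prod.fst hxy)
    refine ⟨?_, ?_, ?_⟩
    · intro p hp
      obtain ⟨x, hx, rfl⟩ := mem_image.1 hp
      exact Finset.mem_product.2 ⟨x.2, Finset.mem_pi.1 hf x.1 x.2⟩
    · ext x
      constructor
      · intro hx
        obtain ⟨p, hp, rfl⟩ := mem_image.1 hx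
        obtain ⟨y, hy, rfl⟩ := mem_image.1 hp
        exact y.2
      · intro hx
        refine mem_image.2 ⟨(x, f x hx), mem_image.2 ⟨⟨x, hx⟩, mem_attach _ _, rfl⟩, rfl⟩
    · rw [Finset.card_image_of_injective _ hginj, Finset.card_attach]
  · -- left inverse
    intro A hA
    simp only [mem_filter, mem_powerset] at hA
    obtain ⟨hsub, himg, hcard⟩ := hA
    have hinj : Set.InjOn Prod.fst (A : Set (ℕ × ℕ)) :=
      injOn_of_card A (by rw [himg, hcard])
    apply Finset.eq_of_subset_of_card_le
    · intro p hp
      obtain ⟨x, hx, rfl⟩ := mem_image.1 hp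
      exact mem_valAt A hinj (by rw [himg]; exact x.2)
    · have hginj : Function.Injective
          (fun x : {y // y ∈ S} => (x.1, valAt A x.1)) := by
        intro x y hxy
        exact Subtype.ext (congrArg Prod.fst hxy)
      rw [hcard, Finset.card_image_of_injective _ hginj, Finset.card_attach]
  · -- right inverse
    intro f hf
    funext x hx
    have hmem : (x, f x hx) ∈ S.attach.image (fun y : {y // y ∈ S} => (y.1, f y.1 y.2)) :=
      mem_image.2 ⟨⟨x, hx⟩, mem_attach _ _, rfl⟩
    have hinj : Set.InjOn Prod.fst
        ((S.attach.image (fun y : {y // y ∈ S} => (y.1, f y.1 y.2))) : Set (ℕ × ℕ)) := by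
      intro p hp q hq hpq
      simp only [Finset.coe_image, Set.mem_image] at hp hq
      obtain ⟨y, _, rfl⟩ := hp
      obtain ⟨z, _, rfl⟩ := hq
      have : y = z := Subtype.ext hpq
      rw [this]
    exact valAt_eq _ hinj hmem

/-- counting all signed m-sets over ground set D -/
lemma sgCard (D : Finset ℕ) (m r : ℕ) :
    (((D ×ˢ Finset.Icc 1 r).powerset).filter
      (fun A => A.card = m ∧ (A.image Prod.fst).card = m)).card
      = D.card.choose m * r ^ m := by
  set F := ((D ×ˢ Finset.Icc 1 r).powerset).filter
      (fun A => A.card = m ∧ (A.image Prod.fst).card = m) with hF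
  have key : F.card = ∑ S ∈ D.powersetCard m,
      (F.filter (fun A => A.image Prod.fst = S)).card := by
    apply Finset.card_eq_sum_card_fiberwise
    intro A hA
    simp only [hF, Finset.mem_coe, mem_filter, mem_powerset] at hA
    rw [Finset.mem_coe, Finset.mem_powersetCard]
    refine ⟨?_, hA.2.2⟩
    intro x hx
    obtain ⟨p, hp, rfl⟩ := mem_image.1 hx
    exact (Finset.mem_product.1 (hA.1 hp)).1
  rw [key]
  have fib : ∀ S ∈ D.powersetCard m,
      (F.filter (fun A => A.image Prod.fst = S)).card = r ^ m := by
    intro S hS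
    rw [Finset.mem_powersetCard] at hS
    have : F.filter (fun A => A.image Prod.fst = S)
        = ((S ×ˢ Finset.Icc 1 r).powerset).filter
          (fun A => A.image Prod.fst = S ∧ A.card = S.card) := by
      ext A
      simp only [hF, mem_filter, mem_powerset]
      constructor
      · rintro ⟨⟨hsub, hcard, hicard⟩, himg⟩
        refine ⟨?_, himg, by rw [hcard, hS.2]⟩
        intro p hp
        exact Finset.mem_product.2 ⟨by rw [← himg]; exact mem_image.2 ⟨p, hp, rfl⟩,
          (Finset.mem_product.1 (hsub hp)).2⟩
      · rintro ⟨hsub, himg, hcard⟩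
        refine ⟨⟨fun p hp => Finset.mem_product.2
          ⟨hS.1 (Finset.mem_product.1 (hsub hp)).1, (Finset.mem_product.1 (hsub hp)).2⟩,
          hcard.trans hS.2, by rw [himg]; exact hS.2⟩, himg⟩
    rw [this, graphCard, hS.2]
  rw [Finset.sum_congr rfl fib, Finset.sum_const, Finset.card_powersetCard, smul_eq_mul]

lemma starCard (n k r : ℕ) (hk : 1 ≤ k) (hn : 1 ≤ n) (hr : 1 ≤ r) :
    (signedStar n k r).card = r ^ (k - 1) * Nat.choose (n - 1) (k - 1) := by
  have := sgCard (Finset.Icc 2 n) (k - 1) r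
  rw [Nat.card_Icc] at this
  have h2n : n + 1 - 2 = n - 1 := by omega
  rw [h2n] at this
  rw [mul_comm, ← this]
  apply Finset.card_bij' (fun A _ => A.erase (1, 1)) (fun B _ => insert (1, 1) B)
  · intro A hA
    simp only [signedStar, mem_filter] at hA
    exact Finset.insert_erase hA.2
  · intro B hB
    simp only [mem_filter, mem_powerset] at hB
    have h11 : (1, 1) ∉ B := by
      intro h
      have := (Finset.mem_product.1 (hB.1 h)).1
      rw [Finset.mem_Icc] at this
      omega
    exact Finset.erase_insert h11
  · -- erase maps into F2
    intro A hA
    simp only [signedStar, signedSets, mem_filter, mem_powerset] at hA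
    obtain ⟨⟨hsub, hcard, hicard⟩, hmem⟩ := hA
    have hinj : Set.InjOn Prod.fst (A : Set (ℕ × ℕ)) :=
      injOn_of_card A (by rw [hicard, hcard])
    simp only [mem_filter, mem_powerset]
    have hinj' : Set.InjOn Prod.fst ((A.erase (1, 1)) : Set (ℕ × ℕ)) :=
      hinj.mono (by exact_mod_cast Finset.erase_subset _ _)
    refine ⟨?_, ?_, ?_⟩
    · intro p hp
      have hpA := Finset.mem_of_mem_erase hp
      have hpne := Finset.ne_of_mem_erase hp
      have h1 := Finset.mem_product.1 (hsub hpA)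
      have hp1 : p.1 ≠ 1 := by
        intro h
        exact hpne (hinj hpA hmem (by simpa using h))
      refine Finset.mem_product.2 ⟨?_, h1.2⟩
      rw [Finset.mem_Icc] at h1 ⊢
      omega
    · rw [Finset.card_erase_of_mem hmem, hcard]
    · rw [Finset.card_image_iff.2 hinj', Finset.card_erase_of_mem hmem, hcard]
  · -- insert maps into star
    intro B hB
    simp only [mem_filter, mem_powerset] at hB
    obtain ⟨hsub, hcard, hicard⟩ := hB
    have h11 : (1, 1) ∉ B := by
      intro h
      have := (Finset.mem_product.1 (hsub h)).1
      rw [Finset.mem_Icc] at this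
      omega
    have h1img : (1 : ℕ) ∉ B.image Prod.fst := by
      intro h
      obtain ⟨p, hp, hp1⟩ := mem_image.1 h
      have := (Finset.mem_product.1 (hsub hp)).1
      rw [Finset.mem_Icc] at this
      omega
    simp only [signedStar, signedSets, mem_filter, mem_powerset]
    refine ⟨⟨?_, ?_, ?_⟩, Finset.mem_insert_self _ _⟩
    · intro p hp
      rcases Finset.mem_insert.1 hp with rfl | hp
      · exact Finset.mem_product.2 ⟨Finset.mem_Icc.2 ⟨le_refl 1, hn⟩,
          Finset.mem_Icc.2 ⟨le_refl 1, hr⟩⟩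
      · have := Finset.mem_product.1 (hsub hp)
        refine Finset.mem_product.2 ⟨?_, this.2⟩
        rw [Finset.mem_Icc] at *
        omega
    · rw [Finset.card_insert_of_notMem h11, hcard]
      omega
    · rw [Finset.image_insert, Finset.card_insert_of_notMem h1img, hicard]
      omega

lemma cast_inj_Icc (r a b : ℕ) (hr : 2 ≤ r) (ha1 : 1 ≤ a) (har : a ≤ r)
    (hb1 : 1 ≤ b) (hbr : b ≤ r) (h : (a : ZMod r) = b) : a = b := by
  haveI : NeZero r := ⟨by omega⟩
  have hmod : a % r = b % r := (ZMod.natCast_eq_natCast_iff a b r).1 h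
  rcases eq_or_lt_of_le har with rfl | ha
  · rcases eq_or_lt_of_le hbr with rfl | hb
    · rfl
    · rw [Nat.mod_self, Nat.mod_eq_of_lt hb] at hmod
      omega
  · rcases eq_or_lt_of_le hbr with rfl | hb
    · rw [Nat.mod_self, Nat.mod_eq_of_lt ha] at hmod
      omega
    · rw [Nat.mod_eq_of_lt ha, Nat.mod_eq_of_lt hb] at hmod
      exact hmod

lemma fiberBound (n k r : ℕ) (hr : 2 ≤ r) (hk : 1 ≤ k)
    (𝒜 : Finset (Finset (ℕ × ℕ))) (h𝒜 : 𝒜 ⊆ signedSets n k r)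
    (hint : ∀ A ∈ 𝒜, ∀ B ∈ 𝒜, (A ∩ B).Nonempty) (S : Finset ℕ) :
    (𝒜.filter (fun A => A.image Prod.fst = S)).card ≤ r ^ (k - 1) := by
  haveI : NeZero r := ⟨by omega⟩
  set Fib := 𝒜.filter (fun A => A.image Prod.fst = S) with hFib
  rcases Fib.eq_empty_or_nonempty with he | ⟨A₀, hA₀⟩
  · simp [he]
  -- basic facts about fiber members
  have fact : ∀ A ∈ Fib, A ∈ 𝒜 ∧ A.image Prod.fst = S ∧ A.card = k ∧
      Set.InjOn Prod.fst (A : Set (ℕ × ℕ)) ∧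
      A ⊆ Finset.Icc 1 n ×ˢ Finset.Icc 1 r := by
    intro A hA
    rw [hFib, mem_filter] at hA
    have hsets := h𝒜 hA.1
    simp only [signedSets, mem_filter, mem_powerset] at hsets
    exact ⟨hA.1, hA.2, hsets.2.1, injOn_of_card A (by rw [hsets.2.2, hsets.2.1]), hsets.1⟩
  obtain ⟨hA₀mem, hA₀img, hA₀card, _, _⟩ := fact A₀ hA₀
  have hScard : S.card = k := by
    rw [← hA₀img, Finset.card_image_iff.2 (fact A₀ hA₀).2.2.2.1, hA₀card]
  have hSne : S.Nonempty := by
    rw [← Finset.card_pos, hScard]; omega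
  set x0 := S.min' hSne with hx0
  have hx0S : x0 ∈ S := S.min'_mem hSne
  -- target: functions from S.erase x0 to ZMod r
  have htcard : ((S.erase x0).pi (fun _ => (Finset.univ : Finset (ZMod r)))).card
      = r ^ (k - 1) := by
    rw [Finset.card_pi, Finset.prod_const, Finset.card_univ, ZMod.card,
      Finset.card_erase_of_mem hx0S, hScard]
  rw [← htcard]
  apply Finset.card_le_card_of_injOn
    (fun A => fun x (_ : x ∈ S.erase x0) => ((valAt A x : ZMod r) - (valAt A x0 : ZMod r)))
  · intro A _
    rw [Finset.mem_coe, Finset.mem_pi]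
    intro x hx
    exact Finset.mem_univ _
  · intro A hA B hB hAB
    obtain ⟨hAmem, hAimg, hAcard, hAinj, hAsub⟩ := fact A hA
    obtain ⟨hBmem, hBimg, hBcard, hBinj, hBsub⟩ := fact B hB
    set c : ZMod r := (valAt A x0 : ZMod r) - (valAt B x0 : ZMod r) with hc
    have key : ∀ x ∈ S, (valAt A x : ZMod r) - (valAt B x : ZMod r) = c := by
      intro x hx
      rcases eq_or_ne x x0 with rfl | hne
      · rfl
      · have hx' : x ∈ S.erase x0 := Finset.mem_erase.2 ⟨hne, hx⟩
        have h := congrFun (congrFun hAB x) hx'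
        simp only at h
        have : (valAt A x : ZMod r) - (valAt A x0 : ZMod r)
            = (valAt B x : ZMod r) - (valAt B x0 : ZMod r) := h
        rw [hc]
        linear_combination this
    by_cases hczero : c = 0
    · -- equal sign functions ⇒ A = B
      have hvals : ∀ x ∈ S, valAt A x = valAt B x := by
        intro x hx
        have h := key x hx
        rw [hczero, sub_eq_zero] at h
        have hxA : (x, valAt A x) ∈ A := mem_valAt A hAinj (by rw [hAimg]; exact hx)
        have hxB : (x, valAt B x) ∈ B := mem_valAt B hBinj (by rw [hBimg]; exact hx)
        have h1 := (Finset.mem_product.1 (hAsub hxA)).2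
        have h2 := (Finset.mem_product.1 (hBsub hxB)).2
        rw [Finset.mem_Icc] at h1 h2
        exact cast_inj_Icc r _ _ hr h1.1 h1.2 h2.1 h2.2 h
      have hsub : A ⊆ B := by
        intro p hp
        have hx : p.1 ∈ S := by rw [← hAimg]; exact mem_image.2 ⟨p, hp, rfl⟩
        have : valAt A p.1 = p.2 := valAt_eq A hAinj (show (p.1, p.2) ∈ A from hp)
        have hpB : (p.1, valAt B p.1) ∈ B := mem_valAt B hBinj (by rw [hBimg]; exact hx)
        rw [← hvals p.1 hx, this] at hpB
        exact hpB
      exact Finset.eq_of_subset_of_card_le hsub (by rw [hAcard, hBcard])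
    · -- c ≠ 0 forces A ∩ B = ∅, contradicting intersecting
      exfalso
      obtain ⟨p, hp⟩ := hint A hAmem B hBmem
      rw [Finset.mem_inter] at hp
      have hx : p.1 ∈ S := by rw [← hAimg]; exact mem_image.2 ⟨p, hp.1, rfl⟩
      have h1 : valAt A p.1 = p.2 := valAt_eq A hAinj (show (p.1, p.2) ∈ A from hp.1)
      have h2 : valAt B p.1 = p.2 := valAt_eq B hBinj (show (p.1, p.2) ∈ B from hp.2)
      have := key p.1 hx
      rw [h1, h2, sub_self] at this
      exact hczero this.symm

lemma supportBound (n k : ℕ) (hk : 1 ≤ k) (hkn : 2 * k ≤ n)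
    (ℬ : Finset (Finset ℕ)) (hsub : ∀ S ∈ ℬ, S ⊆ Finset.Icc 1 n)
    (hsize : ∀ S ∈ ℬ, S.card = k)
    (hint : ∀ S ∈ ℬ, ∀ T ∈ ℬ, (S ∩ T).Nonempty) :
    ℬ.card ≤ (n - 1).choose (k - 1) := by
  have hn : 0 < n := by omega
  set emb : ℕ → Fin n := fun x => ⟨(x - 1) % n, Nat.mod_lt _ hn⟩ with hemb
  have hembinj : Set.InjOn emb (Finset.Icc 1 n : Set ℕ) := by
    intro x hx y hy hxy
    simp only [Finset.coe_Icc, Set.mem_Icc] at hx hy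
    have : (x - 1) % n = (y - 1) % n := congrArg Fin.val hxy
    rw [Nat.mod_eq_of_lt (by omega), Nat.mod_eq_of_lt (by omega)] at this
    omega
  set ℬ' : Finset (Finset (Fin n)) := ℬ.image (fun S => S.image emb) with hB'
  have hinjB : Set.InjOn (fun S => S.image emb) (ℬ : Set (Finset ℕ)) := by
    intro S hS T hT hST
    simp only [Finset.mem_coe] at hS hT
    have hdir : ∀ U ∈ ℬ, ∀ V ∈ ℬ, U.image emb = V.image emb → U ⊆ V := by
      intro U hU V hV h x hx
      have : emb x ∈ V.image emb := by rw [← h]; exact mem_image.2 ⟨x, hx, rfl⟩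
      obtain ⟨y, hy, hxy⟩ := mem_image.1 this
      have := hembinj (by exact_mod_cast hsub V hV hy) (by exact_mod_cast hsub U hU hx) hxy
      rwa [← this]
    exact Finset.Subset.antisymm (hdir S hS T hT hST) (hdir T hT S hS hST.symm)
  have hcards : ℬ'.card = ℬ.card := Finset.card_image_of_injOn hinjB
  rw [← hcards]
  have hn1 : Fintype.card (Fin n) = n := Fintype.card_fin n
  have := Finset.erdos_ko_rado (𝒜 := ℬ') (r := k) ?_ ?_ ?_
  · exact this
  · -- intersecting
    intro S' hS' T' hT'
    simp only [hB', Finset.coe_image, Set.mem_image, Finset.mem_coe] at hS' hT'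
    obtain ⟨S, hS, rfl⟩ := hS'
    obtain ⟨T, hT, rfl⟩ := hT'
    obtain ⟨x, hx⟩ := hint S hS T hT
    rw [Finset.mem_inter] at hx
    rw [Finset.not_disjoint_iff]
    exact ⟨emb x, mem_image.2 ⟨x, hx.1, rfl⟩, mem_image.2 ⟨x, hx.2, rfl⟩⟩
  · -- sized
    intro S' hS'
    simp only [hB', Finset.coe_image, Set.mem_image, Finset.mem_coe] at hS'
    obtain ⟨S, hS, rfl⟩ := hS'
    rw [Finset.card_image_of_injOn (hembinj.mono (by exact_mod_cast hsub S hS))]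
    exact hsize S hS
  · omega

theorem signed_EKR_injective (n k r : ℕ) (hr : 2 ≤ r) (hk : 1 ≤ k) (hkn : 2 * k ≤ n)
    (𝒜 : Finset (Finset (ℕ × ℕ))) (h𝒜 : 𝒜 ⊆ signedSets n k r)
    (hint : ∀ A ∈ 𝒜, ∀ B ∈ 𝒜, (A ∩ B).Nonempty) :
    (∃ f : Finset (ℕ × ℕ) → Finset (ℕ × ℕ),
      Set.InjOn f 𝒜 ∧ ∀ A ∈ 𝒜, f A ∈ signedStar n k r) ∧
    𝒜.card ≤ (signedStar n k r).card ∧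
    (signedStar n k r).card = r ^ (k - 1) * Nat.choose (n - 1) (k - 1) := by
  have hstar : (signedStar n k r).card = r ^ (k - 1) * Nat.choose (n - 1) (k - 1) :=
    starCard n k r hk (by omega) (by omega)
  have fact : ∀ A ∈ 𝒜, A.card = k ∧ Set.InjOn Prod.fst (A : Set (ℕ × ℕ)) ∧
      A ⊆ Finset.Icc 1 n ×ˢ Finset.Icc 1 r := by
    intro A hA
    have hsets := h𝒜 hA
    simp only [signedSets, mem_filter, mem_powerset] at hsets
    exact ⟨hsets.2.1, injOn_of_card A (by rw [hsets.2.2, hsets.2.1]), hsets.1⟩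
  -- the support family
  set ℬ : Finset (Finset ℕ) := 𝒜.image (fun A => A.image Prod.fst) with hBdef
  have hcardle : 𝒜.card ≤ (signedStar n k r).card := by
    rw [hstar]
    have hsum : 𝒜.card = ∑ S ∈ ℬ,
        (𝒜.filter (fun A => A.image Prod.fst = S)).card := by
      apply Finset.card_eq_sum_card_fiberwise
      intro A hA
      exact mem_image.2 ⟨A, hA, rfl⟩
    rw [hsum]
    calc ∑ S ∈ ℬ, (𝒜.filter (fun A => A.image Prod.fst = S)).card
        ≤ ∑ S ∈ ℬ, r ^ (k - 1) :=
          Finset.sum_le_sum (fun S _ => fiberBound n k r hr hk 𝒜 h𝒜 hint S)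
      _ = ℬ.card * r ^ (k - 1) := by rw [Finset.sum_const, smul_eq_mul]
      _ ≤ (n - 1).choose (k - 1) * r ^ (k - 1) := by
          apply Nat.mul_le_mul_right
          apply supportBound n k hk hkn
          · intro S hS
            obtain ⟨A, hA, rfl⟩ := mem_image.1 hS
            intro x hx
            obtain ⟨p, hp, rfl⟩ := mem_image.1 hx
            exact (Finset.mem_product.1 ((fact A hA).2.2 hp)).1
          · intro S hS
            obtain ⟨A, hA, rfl⟩ := mem_image.1 hS
            rw [Finset.card_image_iff.2 (fact A hA).2.1]
            exact (fact A hA).1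
          · intro S hS T hT
            obtain ⟨A, hA, rfl⟩ := mem_image.1 hS
            obtain ⟨B, hB, rfl⟩ := mem_image.1 hT
            obtain ⟨p, hp⟩ := hint A hA B hB
            rw [Finset.mem_inter] at hp
            exact ⟨p.1, Finset.mem_inter.2
              ⟨mem_image.2 ⟨p, hp.1, rfl⟩, mem_image.2 ⟨p, hp.2, rfl⟩⟩⟩
      _ = r ^ (k - 1) * (n - 1).choose (k - 1) := Nat.mul_comm _ _
  refine ⟨?_, hcardle, hstar⟩
  -- construct the injection from the cardinality bound
  classical
  have hle : 𝒜.card ≤ (signedStar n k r).card := hcardle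
  let e₁ := 𝒜.equivFin
  let e₂ := (signedStar n k r).equivFin
  let g : {x // x ∈ 𝒜} → {x // x ∈ signedStar n k r} :=
    fun x => e₂.symm (Fin.castLE hle (e₁ x))
  have hginj : Function.Injective g := by
    intro x y hxy
    apply e₁.injective
    have := e₂.symm.injective hxy
    exact Fin.castLE_injective hle this
  refine ⟨fun A => if h : A ∈ 𝒜 then (g ⟨A, h⟩ : Finset (ℕ × ℕ)) else ∅, ?_, ?_⟩
  · intro A hA B hB hAB
    simp only [Finset.mem_coe] at hA hB
    simp only [dif_pos hA, dif_pos hB] at hAB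
    have := hginj (Subtype.ext hAB)
    exact congrArg Subtype.val this
  · intro A hA
    simp only [dif_pos hA]
    exact (g ⟨A, hA⟩).2
end

section
/- (Erdős–Ko–Rado Theorem) Let n, k ≥ 0 be integers with n ≥ 2k. If ℱ is an intersecting family of k-element subsets of [n], then |ℱ| ≤ C(n−1, k−1). -/
open Finset

/-- Erdős–Ko–Rado Theorem. -/
theorem erdos_ko_rado (n k : ℕ) (hnk : 2 * k ≤ n)
    (ℱ : Finset (Finset ℕ)) (hℱ : ℱ ⊆ (Finset.Icc 1 n).powersetCard k)
    (hint : ∀ F ∈ ℱ, ∀ F' ∈ ℱ, (F ∩ F').Nonempty) :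
    ℱ.card ≤ Nat.choose (n - 1) (k - 1) := by
  rcases Nat.eq_zero_or_pos k with rfl | hk
  · -- k = 0 : every member is ∅, but ∅ ∩ ∅ is empty, so ℱ = ∅
    have : ℱ = ∅ := by
      rw [eq_empty_iff_forall_notMem]
      intro F hF
      have hF' := hℱ hF
      rw [mem_powersetCard] at hF'
      have : F = ∅ := card_eq_zero.mp hF'.2
      obtain ⟨x, hx⟩ := hint F hF F hF
      simp [this] at hx
    simp [this]
  have hn : 0 < n := by omega
  set f : ℕ → Fin n := fun x => ⟨(x - 1) % n, Nat.mod_lt _ hn⟩ with hf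
  have hmem : ∀ F ∈ ℱ, F ⊆ Finset.Icc 1 n ∧ F.card = k := by
    intro F hF; have := hℱ hF; rwa [mem_powersetCard] at this
  have hinj : ∀ F ⊆ Finset.Icc 1 n, ∀ x ∈ F, (f x : ℕ) + 1 = x := by
    intro F hS x hx
    have hx' := hS hx
    rw [Finset.mem_Icc] at hx'
    simp only [hf]
    have : x - 1 < n := by omega
    simp [Nat.mod_eq_of_lt this]
    omega
  have himg : ∀ F ⊆ Finset.Icc 1 n, (F.image f).image (fun i : Fin n => (i : ℕ) + 1) = F := by
    intro F hS
    rw [Finset.image_image]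
    rw [Finset.image_congr (g := id), Finset.image_id]
    intro x hx
    exact hinj F hS x hx
  set 𝒜 : Finset (Finset (Fin n)) := ℱ.image (Finset.image f) with h𝒜
  have hcard : 𝒜.card = ℱ.card := by
    rw [h𝒜]
    apply card_image_of_injOn
    intro F hF F' hF' h
    have := congrArg (Finset.image (fun i : Fin n => (i : ℕ) + 1)) h
    rwa [himg F (hmem F hF).1, himg F' (hmem F' hF').1] at this
  have hsized : (𝒜 : Set (Finset (Fin n))).Sized k := by
    intro A hA
    simp only [h𝒜, coe_image, Set.mem_image, mem_coe] at hA
    obtain ⟨F, hF, rfl⟩ := hA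
    rw [card_image_of_injOn, (hmem F hF).2]
    intro x hx y hy hxy
    have h1 := hinj F (hmem F hF).1 x hx
    have h2 := hinj F (hmem F hF).1 y hy
    rw [hxy] at h1; omega
  have hintersecting : (𝒜 : Set (Finset (Fin n))).Intersecting := by
    intro A hA B hB
    simp only [h𝒜, coe_image, Set.mem_image, mem_coe] at hA hB
    obtain ⟨F, hF, rfl⟩ := hA
    obtain ⟨F', hF', rfl⟩ := hB
    obtain ⟨x, hx⟩ := hint F hF F' hF'
    rw [mem_inter] at hx
    rw [Finset.disjoint_left]
    intro h
    exact h (Finset.mem_image_of_mem f hx.1) (Finset.mem_image_of_mem f hx.2)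
  have h₃ : k ≤ n / 2 := Nat.le_div_iff_mul_le (by norm_num) |>.mpr (by omega)
  calc ℱ.card = 𝒜.card := hcard.symm
    _ ≤ Nat.choose (n - 1) (k - 1) := Finset.erdos_ko_rado hintersecting hsized h₃
end

section
/- (Katona's Intersection Shadow Theorem) Let n, s, t be integers with 0 ≤ t ≤ s ≤ n. If ℱ is a family of s-element subsets of [n] such that |F ∩ F′| ≥ t for all F, F′ ∈ ℱ, then |∂_{s−t}(ℱ)| ≥ |ℱ|. -/
open Finset UV
open scoped FinsetFamily

section KatonaAux

variable {i j t : ℕ} {𝒜 : Finset (Finset ℕ)}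

lemma mem_mShadow' {m : ℕ} {𝒩 : Finset (Finset ℕ)} {A : Finset ℕ} :
    A ∈ 𝒩.sup (fun F => F.powersetCard m) ↔ ∃ B ∈ 𝒩, A ⊆ B ∧ A.card = m := by
  simp [Finset.mem_sup, mem_powersetCard]

lemma choose_step {n k : ℕ} (h : 2 * k + 1 ≤ n) : n.choose k ≤ n.choose (k + 1) := by
  have hid := Nat.choose_succ_right_eq n k
  have h1 : n.choose k * (k + 1) ≤ n.choose k * (n - k) :=
    Nat.mul_le_mul_left _ (by omega)
  rw [← hid] at h1
  exact Nat.le_of_mul_le_mul_right h1 (by omega)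

lemma choose_mono_mid {n a c : ℕ} (hac : a ≤ c) (h : 2 * c ≤ n + 1) :
    n.choose a ≤ n.choose c := by
  induction c, hac using Nat.le_induction with
  | base => exact le_refl _
  | succ c hc ih => exact le_trans (ih (by omega)) (choose_step (by omega))

lemma choose_le_of_between {n a c : ℕ} (hac : a ≤ c) (hc : c ≤ n - a) :
    n.choose a ≤ n.choose c := by
  have han : a ≤ n := by omega
  by_cases h : 2 * c ≤ n + 1
  · exact choose_mono_mid hac h
  · have hcn : c ≤ n := by omega
    rw [← Nat.choose_symm hcn]
    exact choose_mono_mid (by omega) (by omega)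

lemma local_lym' {g : Finset ℕ} {r : ℕ} (hr : 1 ≤ r) {𝒜 : Finset (Finset ℕ)}
    (h𝒜 : 𝒜 ⊆ g.powersetCard r) :
    𝒜.card * r ≤ (∂ 𝒜).card * (g.card - r + 1) := by
  classical
  refine card_mul_le_card_mul' (· ⊆ ·) (fun B hB => ?_) (fun A hA => ?_)
  · -- r ≤ #{A ∈ ∂𝒜 | A ⊆ B}
    obtain ⟨hBg, hBr⟩ := mem_powersetCard.1 (h𝒜 hB)
    rw [← hBr, ← card_image_of_injOn B.erase_injOn]
    refine card_le_card ?_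
    simp_rw [image_subset_iff, mem_bipartiteBelow]
    exact fun a ha => ⟨erase_mem_shadow hB ha, erase_subset _ _⟩
  · -- #{B ∈ 𝒜 | A ⊆ B} ≤ #g - r + 1
    obtain ⟨B₀, hB₀, hAB₀⟩ := exists_subset_of_mem_shadow hA
    obtain ⟨hB₀g, hB₀r⟩ := mem_powersetCard.1 (h𝒜 hB₀)
    have hAcard : A.card = r - 1 := by
      have h2 : A.card + 1 = r := by
        obtain ⟨B, hB, hAB, hcard⟩ := mem_shadow_iff_exists_mem_card_add_one.1 hA
        have := (mem_powersetCard.1 (h𝒜 hB)).2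
        omega
      omega
    have hAg : A ⊆ g := hAB₀.trans hB₀g
    calc #((𝒜).bipartiteAbove (· ⊆ ·) A) ≤ #((g \ A).powersetCard 1) := by
          refine card_le_card_of_injOn (fun B => B \ A) (fun B hB => ?_) ?_
          · rw [mem_coe, mem_bipartiteAbove] at hB
            obtain ⟨hB𝒜, hAB⟩ := hB
            obtain ⟨hBg, hBr⟩ := mem_powersetCard.1 (h𝒜 hB𝒜)
            rw [mem_coe, mem_powersetCard]
            constructor
            · exact sdiff_subset_sdiff hBg (le_refl _)
            · rw [card_sdiff_of_subset hAB]; omega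
          · intro B hB B' hB' hE
            simp only [mem_coe, mem_bipartiteAbove] at hB hB'
            rw [← union_sdiff_of_subset hB.2, ← union_sdiff_of_subset hB'.2]
            simp only at hE
            rw [hE]
      _ ≤ g.card - r + 1 := by
          rw [card_powersetCard, card_sdiff_of_subset hAg, Nat.choose_one_right, hAcard]; omega

lemma shadow_subset_powersetCard {g : Finset ℕ} {r : ℕ} (hr : 1 ≤ r) {𝒜 : Finset (Finset ℕ)}
    (h𝒜 : 𝒜 ⊆ g.powersetCard r) : ∂ 𝒜 ⊆ g.powersetCard (r - 1) := by
  intro A hA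
  obtain ⟨B, hB, hAB, hcard⟩ := mem_shadow_iff_exists_mem_card_add_one.1 hA
  obtain ⟨hBg, hBr⟩ := mem_powersetCard.1 (h𝒜 hB)
  rw [mem_powersetCard]
  exact ⟨hAB.trans hBg, by omega⟩

lemma iter_lym {k : ℕ} : ∀ {r : ℕ} {g : Finset ℕ} {𝒜 : Finset (Finset ℕ)}, k ≤ r → r ≤ g.card →
    𝒜 ⊆ g.powersetCard r →
    𝒜.card * (g.card.choose (r - k)) ≤ (∂^[k] 𝒜).card * (g.card.choose r) := by
  induction k with
  | zero => intro r g 𝒜 _ _ _; simp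
  | succ k ih =>
    intro r g 𝒜 hkr hrg h𝒜
    have hr1 : 1 ≤ r := by omega
    have hB : ∂ 𝒜 ⊆ g.powersetCard (r - 1) := shadow_subset_powersetCard hr1 h𝒜
    have h2 := ih (r := r - 1) (g := g) (𝒜 := ∂ 𝒜) (by omega) (by omega) hB
    have h1 := local_lym' hr1 h𝒜
    set N := g.card with hN
    have hid : N.choose r * r = N.choose (r - 1) * (N - r + 1) := by
      have := Nat.choose_succ_right_eq N (r - 1)
      have e1 : r - 1 + 1 = r := by omega
      have e2 : N - (r - 1) = N - r + 1 := by omega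
      rw [e1, e2] at this
      exact this
    have hpos : 0 < r * N.choose (r - 1) :=
      Nat.mul_pos (by omega) (Nat.choose_pos (by omega))
    rw [Function.iterate_succ_apply]
    have e3 : r - (k + 1) = r - 1 - k := by omega
    rw [e3]
    refine Nat.le_of_mul_le_mul_right ?_ hpos
    calc 𝒜.card * N.choose (r - 1 - k) * (r * N.choose (r - 1))
        = (𝒜.card * r) * (N.choose (r - 1 - k) * N.choose (r - 1)) := by ring
      _ ≤ ((∂ 𝒜).card * (N - r + 1)) * (N.choose (r - 1 - k) * N.choose (r - 1)) :=
          Nat.mul_le_mul_right _ h1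
      _ = ((∂ 𝒜).card * N.choose (r - 1 - k)) * ((N - r + 1) * N.choose (r - 1)) := by ring
      _ ≤ ((∂^[k] (∂ 𝒜)).card * N.choose (r - 1)) * ((N - r + 1) * N.choose (r - 1)) :=
          Nat.mul_le_mul_right _ h2
      _ = (∂^[k] (∂ 𝒜)).card * (N.choose (r - 1) * (N - r + 1)) * N.choose (r - 1) := by ring
      _ = (∂^[k] (∂ 𝒜)).card * (N.choose r * r) * N.choose (r - 1) := by rw [hid]
      _ = (∂^[k] (∂ 𝒜)).card * N.choose r * (r * N.choose (r - 1)) := by ring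

lemma katona_base {n s t : ℕ} (ht : 1 ≤ t) (hts : t ≤ s) (hsn : s ≤ n)
    (hn : n ≤ 2 * s - t) {ℱ : Finset (Finset ℕ)}
    (hℱ : ℱ ⊆ (Finset.Icc 1 n).powersetCard s) :
    ℱ.card ≤ (∂^[t] ℱ).card := by
  have hg : (Finset.Icc 1 n).card = n := by rw [Nat.card_Icc]; omega
  have h1 := iter_lym (k := t) (r := s) (g := Finset.Icc 1 n) hts (by omega) hℱ
  rw [hg] at h1
  have h2 : n.choose s ≤ n.choose (s - t) :=
    calc n.choose s = n.choose (n - s) := (Nat.choose_symm hsn).symm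
      _ ≤ n.choose (s - t) := choose_le_of_between (by omega) (by omega)
  have hpos : 0 < n.choose s := Nat.choose_pos hsn
  refine Nat.le_of_mul_le_mul_right ?_ hpos
  calc ℱ.card * n.choose s ≤ ℱ.card * n.choose (s - t) := Nat.mul_le_mul_left _ h2
    _ ≤ (∂^[t] ℱ).card * n.choose s := h1

lemma compress_singleton_eq (hij : i ≠ j) {a : Finset ℕ} (hi : i ∉ a) (hj : j ∈ a) :
    compress ({i} : Finset ℕ) {j} a = insert i (a.erase j) := by
  rw [compress_of_disjoint_of_le (by simpa using hi) (by simpa using hj)]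
  ext x
  simp only [sup_eq_union, mem_sdiff, mem_union, mem_singleton, mem_insert, mem_erase]
  constructor
  · rintro ⟨h1 | h1, h2⟩
    · exact Or.inr ⟨h2, h1⟩
    · exact Or.inl h1
  · rintro (rfl | ⟨h1, h2⟩)
    · exact ⟨Or.inr rfl, hij⟩
    · exact ⟨Or.inl h2, h1⟩

lemma compress_singleton_cases (hij : i ≠ j) (a : Finset ℕ) :
    compress ({i} : Finset ℕ) {j} a = a ∨
      (i ∉ a ∧ j ∈ a ∧ compress ({i} : Finset ℕ) {j} a = insert i (a.erase j)) := by
  by_cases h : Disjoint ({i} : Finset ℕ) a ∧ ({j} : Finset ℕ) ≤ a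
  · right
    have hi : i ∉ a := by simpa using h.1
    have hj : j ∈ a := by simpa using h.2
    exact ⟨hi, hj, compress_singleton_eq hij hi hj⟩
  · left
    rw [UV.compress, if_neg h]

/-- Kept sets still in the family intersect moved sets enough. -/
lemma key_moved (hij : i ≠ j)
    (hint : ∀ F ∈ 𝒜, ∀ F' ∈ 𝒜, t ≤ (F ∩ F').card)
    {G B : Finset ℕ} (hG : G ∈ 𝒜) (hCG : compress ({i} : Finset ℕ) {j} G ∈ 𝒜)
    (hB : B ∈ 𝒜) (hiB : i ∉ B) (hjB : j ∈ B) :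
    t ≤ (G ∩ insert i (B.erase j)).card := by
  by_cases hjG : j ∈ G
  · by_cases hiG : i ∈ G
    · -- insert i ((G∩B).erase j) ⊆ G ∩ G'
      have hsub : insert i ((G ∩ B).erase j) ⊆ G ∩ insert i (B.erase j) := by
        intro x hx
        simp only [mem_insert, mem_erase, mem_inter] at hx ⊢
        rcases hx with rfl | ⟨hxj, hxG, hxB⟩
        · exact ⟨hiG, Or.inl rfl⟩
        · exact ⟨hxG, Or.inr ⟨hxj, hxB⟩⟩
      have hic : i ∉ (G ∩ B).erase j := fun h => hiB (mem_inter.1 (mem_of_mem_erase h)).2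
      have hjc : j ∈ G ∩ B := mem_inter.2 ⟨hjG, hjB⟩
      have h1 : t ≤ (G ∩ B).card := hint G hG B hB
      have h2 := card_erase_of_mem hjc
      have h3 := card_insert_of_notMem hic
      have := card_le_card hsub
      omega
    · -- i ∉ G: use compressed G
      have hCGe : compress ({i} : Finset ℕ) {j} G = insert i (G.erase j) :=
        compress_singleton_eq hij hiG hjG
      rw [hCGe] at hCG
      have h1 : t ≤ (insert i (G.erase j) ∩ B).card := hint _ hCG B hB
      have he : insert i (G.erase j) ∩ B = (G ∩ B).erase j := by
        ext x
        simp only [mem_inter, mem_insert, mem_erase]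
        constructor
        · rintro ⟨rfl | ⟨hxj, hxG⟩, hxB⟩
          · exact absurd hxB hiB
          · exact ⟨hxj, hxG, hxB⟩
        · rintro ⟨hxj, hxG, hxB⟩
          exact ⟨Or.inr ⟨hxj, hxG⟩, hxB⟩
      rw [he] at h1
      refine h1.trans (card_le_card ?_)
      intro x hx
      simp only [mem_erase, mem_inter, mem_insert] at hx ⊢
      exact ⟨hx.2.1, Or.inr ⟨hx.1, hx.2.2⟩⟩
  · -- j ∉ G
    have h1 : t ≤ (G ∩ B).card := hint G hG B hB
    refine h1.trans (card_le_card ?_)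
    intro x hx
    simp only [mem_inter, mem_insert, mem_erase] at hx ⊢
    exact ⟨hx.1, Or.inr ⟨fun h => hjG (h ▸ hx.1), hx.2⟩⟩

lemma compression_intersecting (hij : i ≠ j)
    (hint : ∀ F ∈ 𝒜, ∀ F' ∈ 𝒜, t ≤ (F ∩ F').card) :
    ∀ G ∈ 𝓒 {i} {j} 𝒜, ∀ G' ∈ 𝓒 {i} {j} 𝒜, t ≤ (G ∩ G').card := by
  intro G hG G' hG'
  rw [UV.mem_compression] at hG hG'
  rcases hG with ⟨hG, hCG⟩ | ⟨hGn, B, hB, rfl⟩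
  · rcases hG' with ⟨hG', _⟩ | ⟨hG'n, B', hB', rfl⟩
    · exact hint G hG G' hG'
    · rcases compress_singleton_cases hij B' with h | ⟨hiB, hjB, h⟩
      · rw [h]; rw [h] at hG'n; exact absurd hB' hG'n
      · rw [h]; exact key_moved hij hint hG hCG hB' hiB hjB
  · rcases compress_singleton_cases hij B with h | ⟨hiB, hjB, h⟩
    · rw [h] at hGn; exact absurd hB hGn
    · rcases hG' with ⟨hG', hCG'⟩ | ⟨hG'n, B', hB', rfl⟩
      · rw [h, inter_comm]
        exact key_moved hij hint hG' hCG' hB hiB hjB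
      · rcases compress_singleton_cases hij B' with h' | ⟨hiB', hjB', h'⟩
        · rw [h'] at hG'n; exact absurd hB' hG'n
        · rw [h, h']
          have hsub : insert i ((B ∩ B').erase j) ⊆
              insert i (B.erase j) ∩ insert i (B'.erase j) := by
            intro x hx
            simp only [mem_insert, mem_erase, mem_inter] at hx ⊢
            rcases hx with rfl | ⟨hxj, hxB, hxB'⟩
            · exact ⟨Or.inl rfl, Or.inl rfl⟩
            · exact ⟨Or.inr ⟨hxj, hxB⟩, Or.inr ⟨hxj, hxB'⟩⟩
          have hic : i ∉ (B ∩ B').erase j := fun h => hiB (mem_inter.1 (mem_of_mem_erase h)).1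
          have hjc : j ∈ B ∩ B' := mem_inter.2 ⟨hjB, hjB'⟩
          have h1 : t ≤ (B ∩ B').card := hint B hB B' hB'
          have h2 := card_erase_of_mem hjc
          have h3 := card_insert_of_notMem hic
          have := card_le_card hsub
          omega

lemma compression_subset_powersetCard (hij : i ≠ j) {g : Finset ℕ} {s : ℕ} (hi : i ∈ g)
    (h𝒜 : 𝒜 ⊆ g.powersetCard s) : 𝓒 {i} {j} 𝒜 ⊆ g.powersetCard s := by
  intro A hA
  rw [UV.mem_compression] at hA
  rcases hA with ⟨hA, _⟩ | ⟨_, B, hB, rfl⟩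
  · exact h𝒜 hA
  · rcases compress_singleton_cases hij B with h | ⟨hiB, hjB, h⟩
    · rw [h]; exact h𝒜 hB
    · rw [h]
      obtain ⟨hBg, hBs⟩ := mem_powersetCard.1 (h𝒜 hB)
      rw [mem_powersetCard]
      constructor
      · intro x hx
        rcases mem_insert.1 hx with rfl | hx
        · exact hi
        · exact hBg (mem_of_mem_erase hx)
      · have h1 : i ∉ B.erase j := fun h => hiB (mem_of_mem_erase h)
        rw [card_insert_of_notMem h1, card_erase_of_mem hjB]
        have : 1 ≤ B.card := card_pos.2 ⟨j, hjB⟩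
        omega

lemma card_shadow_iterate_compression_le (hij : i ≠ j) (k : ℕ) :
    ∀ 𝒜 : Finset (Finset ℕ), (∂^[k] (𝓒 {i} {j} 𝒜)).card ≤ (∂^[k] 𝒜).card := by
  induction k with
  | zero => intro 𝒜; simp [UV.card_compression]
  | succ k ih =>
    intro 𝒜
    have huv : ∀ x ∈ ({i} : Finset ℕ), ∃ y ∈ ({j} : Finset ℕ),
        IsCompressed (({i} : Finset ℕ).erase x) (({j} : Finset ℕ).erase y) 𝒜 := by
      intro x hx
      rw [mem_singleton] at hx
      subst hx
      exact ⟨j, mem_singleton_self _, by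
        rw [erase_singleton, erase_singleton]; exact isCompressed_self _ _⟩
    have h1 : ∂ (𝓒 {i} {j} 𝒜) ⊆ 𝓒 {i} {j} (∂ 𝒜) :=
      shadow_compression_subset_compression_shadow _ _ huv
    calc (∂^[k+1] (𝓒 {i} {j} 𝒜)).card = (∂^[k] (∂ (𝓒 {i} {j} 𝒜))).card := by
          rw [Function.iterate_succ_apply]
      _ ≤ (∂^[k] (𝓒 {i} {j} (∂ 𝒜))).card := card_le_card (shadow_monotone.iterate k h1)
      _ ≤ (∂^[k] (∂ 𝒜)).card := ih _
      _ = (∂^[k+1] 𝒜).card := by rw [Function.iterate_succ_apply]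

def famMeasure (𝒜 : Finset (Finset ℕ)) : ℕ := ∑ F ∈ 𝒜, ∑ x ∈ F, x

lemma famMeasure_compression_lt (hij : i < j) (h : 𝓒 {i} {j} 𝒜 ≠ 𝒜) :
    famMeasure (𝓒 {i} {j} 𝒜) < famMeasure 𝒜 := by
  rw [UV.compression] at h ⊢
  have q : ∀ Q ∈ {A ∈ 𝒜 | compress ({i} : Finset ℕ) {j} A ∉ 𝒜},
      compress ({i} : Finset ℕ) {j} Q ≠ Q := by
    simp_rw [mem_filter]
    intro Q hQ hQ2
    rw [hQ2] at hQ
    exact hQ.2 hQ.1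
  have uA : {A ∈ 𝒜 | compress ({i} : Finset ℕ) {j} A ∈ 𝒜} ∪
      {A ∈ 𝒜 | compress ({i} : Finset ℕ) {j} A ∉ 𝒜} = 𝒜 := filter_union_filter_not_eq _ _
  have ne₂ : {A ∈ 𝒜 | compress ({i} : Finset ℕ) {j} A ∉ 𝒜}.Nonempty := by
    refine nonempty_iff_ne_empty.2 fun z => h ?_
    rw [filter_image, z, image_empty, union_empty]
    rwa [z, union_empty] at uA
  rw [famMeasure, famMeasure, sum_union compress_disjoint]
  conv_rhs => rw [← uA]
  rw [sum_union (disjoint_filter_filter_not _ _ _), add_lt_add_iff_left, filter_image,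
    sum_image compress_injOn]
  refine sum_lt_sum_of_nonempty ne₂ fun A hA => ?_
  have hne := q A hA
  rcases compress_singleton_cases hij.ne A with hc | ⟨hiA, hjA, hc⟩
  · exact absurd hc hne
  · rw [hc]
    have hi' : i ∉ A.erase j := fun hmem => hiA (mem_of_mem_erase hmem)
    rw [sum_insert hi']
    have hsum : ∑ x ∈ A.erase j, x + j = ∑ x ∈ A, x := Finset.sum_erase_add _ _ hjA
    have hjle : j ≤ ∑ x ∈ A, x := single_le_sum (f := fun x => x) (fun _ _ => Nat.zero_le _) hjA
    omega

lemma exists_shifted (n s t : ℕ) : ∀ (N : ℕ) (𝒜 : Finset (Finset ℕ)), famMeasure 𝒜 ≤ N →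
    𝒜 ⊆ (Finset.Icc 1 n).powersetCard s → (∀ F ∈ 𝒜, ∀ F' ∈ 𝒜, t ≤ (F ∩ F').card) →
    ∃ 𝒢 : Finset (Finset ℕ), 𝒢 ⊆ (Finset.Icc 1 n).powersetCard s ∧
      (∀ F ∈ 𝒢, ∀ F' ∈ 𝒢, t ≤ (F ∩ F').card) ∧ 𝒢.card = 𝒜.card ∧
      (∀ k, (∂^[k] 𝒢).card ≤ (∂^[k] 𝒜).card) ∧
      (∀ i' j', i' ∈ Finset.Icc 1 n → j' ∈ Finset.Icc 1 n → i' < j' →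
        IsCompressed ({i'} : Finset ℕ) {j'} 𝒢) := by
  intro N
  induction N with
  | zero =>
    intro 𝒜 hm hsub hint
    by_cases hc : ∀ i' j', i' ∈ Finset.Icc 1 n → j' ∈ Finset.Icc 1 n → i' < j' →
        IsCompressed ({i'} : Finset ℕ) {j'} 𝒜
    · exact ⟨𝒜, hsub, hint, rfl, fun k => le_refl _, hc⟩
    · push_neg at hc
      obtain ⟨i', j', hi', hj', hij', hnc⟩ := hc
      have := famMeasure_compression_lt hij' hnc
      omega
  | succ N ih =>
    intro 𝒜 hm hsub hint
    by_cases hc : ∀ i' j', i' ∈ Finset.Icc 1 n → j' ∈ Finset.Icc 1 n → i' < j' →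
        IsCompressed ({i'} : Finset ℕ) {j'} 𝒜
    · exact ⟨𝒜, hsub, hint, rfl, fun k => le_refl _, hc⟩
    · push_neg at hc
      obtain ⟨i', j', hi', hj', hij', hnc⟩ := hc
      have hlt := famMeasure_compression_lt hij' hnc
      obtain ⟨𝒢, h1, h2, h3, h4, h5⟩ := ih (𝓒 {i'} {j'} 𝒜) (by omega)
        (compression_subset_powersetCard hij'.ne hi' hsub)
        (compression_intersecting hij'.ne hint)
      refine ⟨𝒢, h1, h2, ?_, ?_, h5⟩
      · rw [h3, UV.card_compression]
      · intro k
        exact (h4 k).trans (card_shadow_iterate_compression_le hij'.ne k 𝒜)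

lemma katona_aux : ∀ (n s t : ℕ) (ℱ : Finset (Finset ℕ)), t ≤ s → s ≤ n →
    ℱ ⊆ (Finset.Icc 1 n).powersetCard s →
    (∀ F ∈ ℱ, ∀ F' ∈ ℱ, t ≤ (F ∩ F').card) →
    ℱ.card ≤ (∂^[t] ℱ).card := by
  intro n
  induction n with
  | zero =>
    intro s t ℱ hts hsn _ _
    interval_cases s
    interval_cases t
    simp
  | succ m ih =>
    intro s t ℱ hts hsn hsub hint
    rcases Nat.eq_zero_or_pos t with rfl | ht
    · simp
    by_cases hbase : m + 1 ≤ 2 * s - t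
    · exact katona_base ht hts hsn hbase hsub
    · push_neg at hbase
      have h2st : 2 * s - t ≤ m := by omega
      have hsm : s ≤ m := by omega
      obtain ⟨𝒢, h𝒢sub, h𝒢int, h𝒢card, h𝒢sh, h𝒢comp⟩ :=
        exists_shifted (m + 1) s t (famMeasure ℱ) ℱ le_rfl hsub hint
      rw [← h𝒢card]
      refine le_trans ?_ (h𝒢sh t)
      -- now prove #𝒢 ≤ #(∂^[t] 𝒢)
      clear h𝒢card h𝒢sh hsub hint
      set n := m + 1 with hn
      classical
      set 𝒢₀ : Finset (Finset ℕ) := 𝒢.filter (fun F => n ∉ F) with h𝒢₀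
      set 𝒢₁ : Finset (Finset ℕ) := 𝒢.filter (fun F => n ∈ F) with h𝒢₁
      set 𝒢₁' : Finset (Finset ℕ) := 𝒢₁.image (fun F => F.erase n) with h𝒢₁'
      have hsized : ∀ F ∈ 𝒢, F ⊆ Finset.Icc 1 n ∧ F.card = s := by
        intro F hF; exact mem_powersetCard.1 (h𝒢sub hF)
      -- 𝒢₀ facts
      have h𝒢₀sub : 𝒢₀ ⊆ (Finset.Icc 1 m).powersetCard s := by
        intro F hF
        rw [h𝒢₀, mem_filter] at hF
        obtain ⟨hFg, hFs⟩ := hsized F hF.1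
        rw [mem_powersetCard]
        refine ⟨fun x hx => ?_, hFs⟩
        have := hFg hx
        rw [Finset.mem_Icc] at this ⊢
        have : x ≠ n := fun h => hF.2 (h ▸ hx)
        omega
      have h𝒢₀int : ∀ F ∈ 𝒢₀, ∀ F' ∈ 𝒢₀, t ≤ (F ∩ F').card := fun F hF F' hF' =>
        h𝒢int F (filter_subset _ _ hF) F' (filter_subset _ _ hF')
      have ihA : 𝒢₀.card ≤ (∂^[t] 𝒢₀).card := ih s t 𝒢₀ hts hsm h𝒢₀sub h𝒢₀int
      -- key: 𝒢₁' is t-intersecting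
      have hkey : ∀ F ∈ 𝒢₁, ∀ F' ∈ 𝒢₁, t ≤ ((F.erase n) ∩ (F'.erase n)).card := by
        intro F hF F' hF'
        rw [h𝒢₁, mem_filter] at hF hF'
        obtain ⟨hF𝒢, hFn⟩ := hF
        obtain ⟨hF'𝒢, hF'n⟩ := hF'
        obtain ⟨hFg, hFs⟩ := hsized F hF𝒢
        obtain ⟨hF'g, hF's⟩ := hsized F' hF'𝒢
        -- find i ∉ F ∪ F'
        have hcard : (F ∪ F').card ≤ 2 * s - t := by
          have h1 := card_union_add_card_inter F F'
          have h2 := h𝒢int F hF𝒢 F' hF'𝒢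
          omega
        have hne : (Finset.Icc 1 n \ (F ∪ F')).Nonempty := by
          rw [← card_pos]
          have h3 := le_card_sdiff (F ∪ F') (Finset.Icc 1 n)
          have h4 : (Finset.Icc 1 n).card = n := by rw [Nat.card_Icc]; omega
          omega
        obtain ⟨i, hi⟩ := hne
        rw [mem_sdiff, mem_union] at hi
        obtain ⟨hiIcc, hiF⟩ := hi
        push_neg at hiF
        have hin : i ≠ n := fun h => hiF.1 (h ▸ hFn)
        have hiltn : i < n := by
          have := Finset.mem_Icc.1 hiIcc; omega
        have hcomp := h𝒢comp i n hiIcc (Finset.mem_Icc.2 (by omega)) hiltn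
        have hG : compress ({i} : Finset ℕ) {n} F ∈ 𝒢 := by
          have := UV.compress_mem_compression (u := ({i} : Finset ℕ)) (v := ({n} : Finset ℕ)) hF𝒢
          rwa [hcomp] at this
        rw [compress_singleton_eq hin hiF.1 hFn] at hG
        have h5 := h𝒢int _ hG F' hF'𝒢
        have heq : insert i (F.erase n) ∩ F' = (F.erase n) ∩ (F'.erase n) := by
          ext x
          simp only [mem_inter, mem_insert, mem_erase]
          constructor
          · rintro ⟨rfl | ⟨hxn, hxF⟩, hxF'⟩
            · exact absurd hxF' hiF.2
            · exact ⟨⟨hxn, hxF⟩, hxn, hxF'⟩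
          · rintro ⟨⟨hxn, hxF⟩, _, hxF'⟩
            exact ⟨Or.inr ⟨hxn, hxF⟩, hxF'⟩
        rwa [heq] at h5
      rcases eq_or_ne 𝒢₁ ∅ with h𝒢₁e | h𝒢₁ne
      · -- no set contains n
        have : 𝒢₀ = 𝒢 := by
          rw [h𝒢₀, filter_eq_self]
          intro F hF
          by_contra hFn
          have : F ∈ 𝒢₁ := by rw [h𝒢₁, mem_filter]; exact ⟨hF, by tauto⟩
          rw [h𝒢₁e] at this
          exact notMem_empty _ this
        rw [← this]
        exact ihA
      · -- 𝒢₁ nonempty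
        obtain ⟨F₀, hF₀⟩ := nonempty_iff_ne_empty.2 h𝒢₁ne
        have hts1 : t ≤ s - 1 := by
          have h1 := hkey F₀ hF₀ F₀ hF₀
          have h2 : (F₀.erase n ∩ F₀.erase n).card = s - 1 := by
            rw [inter_self, card_erase_of_mem]
            · rw [(hsized F₀ (filter_subset _ _ hF₀)).2]
            · exact (mem_filter.1 hF₀).2
          omega
        have hs1 : 1 ≤ s := by omega
        -- 𝒢₁' facts
        have h𝒢₁'sub : 𝒢₁' ⊆ (Finset.Icc 1 m).powersetCard (s - 1) := by
          intro E hE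
          rw [h𝒢₁', mem_image] at hE
          obtain ⟨F, hF, rfl⟩ := hE
          rw [h𝒢₁, mem_filter] at hF
          obtain ⟨hFg, hFs⟩ := hsized F hF.1
          rw [mem_powersetCard]
          constructor
          · intro x hx
            rw [mem_erase] at hx
            have := hFg hx.2
            rw [Finset.mem_Icc] at this ⊢
            have := hx.1
            omega
          · rw [card_erase_of_mem hF.2, hFs]
        have h𝒢₁'int : ∀ E ∈ 𝒢₁', ∀ E' ∈ 𝒢₁', t ≤ (E ∩ E').card := by
          intro E hE E' hE'
          rw [h𝒢₁', mem_image] at hE hE'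
          obtain ⟨F, hF, rfl⟩ := hE
          obtain ⟨F', hF', rfl⟩ := hE'
          exact hkey F hF F' hF'
        have ihB : 𝒢₁'.card ≤ (∂^[t] 𝒢₁').card :=
          ih (s - 1) t 𝒢₁' hts1 (by omega) h𝒢₁'sub h𝒢₁'int
        -- cards
        have hcard01 : 𝒢₀.card + 𝒢₁.card = 𝒢.card := by
          rw [h𝒢₀, h𝒢₁]
          rw [add_comm]
          exact card_filter_add_card_filter_not (p := fun F => n ∈ F)
        have hcard1' : 𝒢₁'.card = 𝒢₁.card := by
          rw [h𝒢₁']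
          refine card_image_of_injOn ?_
          intro F hF F' hF' hE
          have hFn := (mem_filter.1 hF).2
          have hF'n := (mem_filter.1 hF').2
          simp only at hE
          rw [← insert_erase hFn, ← insert_erase hF'n, hE]
        -- combine
        have hsub1 : ∂^[t] 𝒢₀ ⊆ ∂^[t] 𝒢 := shadow_monotone.iterate t (filter_subset _ _)
        have hsub2 : (∂^[t] 𝒢₁').image (insert n) ⊆ ∂^[t] 𝒢 := by
          intro A hA
          rw [mem_image] at hA
          obtain ⟨B, hB, rfl⟩ := hA
          rw [mem_shadow_iterate_iff_exists_sdiff] at hB ⊢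
          obtain ⟨E, hE, hBE, hcard⟩ := hB
          rw [h𝒢₁', mem_image] at hE
          obtain ⟨F, hF, rfl⟩ := hE
          have hFn := (mem_filter.1 hF).2
          refine ⟨F, filter_subset _ _ hF, ?_, ?_⟩
          · intro x hx
            rcases mem_insert.1 hx with rfl | hx
            · exact hFn
            · exact mem_of_mem_erase (hBE hx)
          · have : F \ insert n B = (F.erase n) \ B := by
              ext x
              simp only [mem_sdiff, mem_insert, mem_erase, not_or]
              tauto
            rw [this, hcard]
        have hdisj : Disjoint (∂^[t] 𝒢₀) ((∂^[t] 𝒢₁').image (insert n)) := by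
          rw [disjoint_left]
          intro A hA hA'
          rw [mem_shadow_iterate_iff_exists_sdiff] at hA
          obtain ⟨F, hF, hAF, _⟩ := hA
          have hFn := (mem_filter.1 hF).2
          rw [mem_image] at hA'
          obtain ⟨B, _, rfl⟩ := hA'
          exact hFn (hAF (mem_insert_self n B))
        have hinj : ((∂^[t] 𝒢₁').image (insert n)).card = (∂^[t] 𝒢₁').card := by
          refine card_image_of_injOn ?_
          intro B hB B' hB' hE
          have hnB : n ∉ B := by
            rw [mem_coe, mem_shadow_iterate_iff_exists_sdiff] at hB
            obtain ⟨E, hE', hBE, _⟩ := hB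
            obtain ⟨hEg, _⟩ := mem_powersetCard.1 (h𝒢₁'sub hE')
            intro hnB
            have := hEg (hBE hnB)
            rw [Finset.mem_Icc] at this
            omega
          have hnB' : n ∉ B' := by
            rw [mem_coe, mem_shadow_iterate_iff_exists_sdiff] at hB'
            obtain ⟨E, hE', hBE, _⟩ := hB'
            obtain ⟨hEg, _⟩ := mem_powersetCard.1 (h𝒢₁'sub hE')
            intro hnB
            have := hEg (hBE hnB)
            rw [Finset.mem_Icc] at this
            omega
          rw [← erase_insert hnB, ← erase_insert hnB', hE]
        calc 𝒢.card = 𝒢₀.card + 𝒢₁.card := hcard01.symm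
          _ ≤ (∂^[t] 𝒢₀).card + (∂^[t] 𝒢₁').card := by
              rw [← hcard1'] at *
              exact Nat.add_le_add ihA ihB
          _ = ((∂^[t] 𝒢₀) ∪ (∂^[t] 𝒢₁').image (insert n)).card := by
              rw [card_union_of_disjoint hdisj, hinj]
          _ ≤ (∂^[t] 𝒢).card := card_le_card (union_subset hsub1 hsub2)
end KatonaAux

/-- The `m`-shadow of a family `𝒩`: all `m`-element sets contained in some member of `𝒩`. -/
def mShadow (m : ℕ) (𝒩 : Finset (Finset ℕ)) : Finset (Finset ℕ) :=
  𝒩.sup (fun F => F.powersetCard m)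

lemma mShadow_eq_iter {s k : ℕ} (hk : k ≤ s) {𝒜 : Finset (Finset ℕ)}
    (h : ∀ A ∈ 𝒜, A.card = s) : mShadow (s - k) 𝒜 = ∂^[k] 𝒜 := by
  ext A
  rw [mShadow, mem_mShadow', mem_shadow_iterate_iff_exists_sdiff]
  constructor
  · rintro ⟨B, hB, hAB, hA⟩
    refine ⟨B, hB, hAB, ?_⟩
    rw [card_sdiff_of_subset hAB, h B hB, hA]
    omega
  · rintro ⟨B, hB, hAB, hA⟩
    refine ⟨B, hB, hAB, ?_⟩
    have h1 := card_sdiff_of_subset hAB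
    have h2 := card_le_card hAB
    have h3 := h B hB
    omega

/-- Katona's Intersection Shadow Theorem. -/
theorem katona_intersection_shadow (n s t : ℕ) (hts : t ≤ s) (hsn : s ≤ n)
    (ℱ : Finset (Finset ℕ)) (hℱ : ℱ ⊆ (Finset.Icc 1 n).powersetCard s)
    (hint : ∀ F ∈ ℱ, ∀ F' ∈ ℱ, t ≤ (F ∩ F').card) :
    ℱ.card ≤ (mShadow (s - t) ℱ).card := by
  rw [mShadow_eq_iter hts (fun A hA => (mem_powersetCard.1 (hℱ hA)).2)]
  exact katona_aux n s t ℱ hts hsn hℱ hint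
end

section
/- Let k, r ≥ 1 be integers and let M be a k-element set. If 𝒜 is an intersecting family of r-signed k-sets all having support M (i.e., every A ∈ 𝒜 has the form {(x, a_x) : x ∈ M} with each a_x ∈ [r]), then |𝒜| ≤ r^(k−1). -/
open Finset

/-- An intersecting family of `r`-signed `k`-sets, all with the same support `M`
(so each member is of the form `{(x, a_x) : x ∈ M}` with values `a_x ∈ [r]`),
has at most `r^(k-1)` members. -/
theorem signed_fixed_support (k r : ℕ) (hk : 1 ≤ k) (hr : 1 ≤ r)
    (M : Finset ℕ) (hM : M.card = k)
    (𝒜 : Finset (Finset (ℕ × ℕ)))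
    (h𝒜 : ∀ A ∈ 𝒜, A.image Prod.fst = M ∧ A.card = k ∧ ∀ p ∈ A, p.2 ∈ Finset.Icc 1 r)
    (hint : ∀ A ∈ 𝒜, ∀ B ∈ 𝒜, (A ∩ B).Nonempty) :
    𝒜.card ≤ r ^ (k - 1) := by
  classical
  haveI : NeZero r := ⟨by omega⟩
  have hMne : M.Nonempty := card_pos.mp (by omega)
  obtain ⟨x0, hx0⟩ := hMne
  -- the value function of the graph A
  set f : Finset (ℕ × ℕ) → ℕ → ℕ := fun A x =>
    if h : ∃ a, (x, a) ∈ A then h.choose else 0 with hf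
  have hmem : ∀ A ∈ 𝒜, ∀ x ∈ M, (x, f A x) ∈ A := by
    intro A hA x hx
    have hx' : x ∈ A.image Prod.fst := by rw [(h𝒜 A hA).1]; exact hx
    obtain ⟨p, hp, hpx⟩ := mem_image.mp hx'
    have h : ∃ a, (x, a) ∈ A := ⟨p.2, by rw [← hpx]; simpa using hp⟩
    simp only [hf, dif_pos h]
    exact h.choose_spec
  have huniq : ∀ A ∈ 𝒜, ∀ x a, (x, a) ∈ A → a = f A x := by
    intro A hA x a ha
    have hinj : Set.InjOn Prod.fst (A : Set (ℕ × ℕ)) := by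
      apply Finset.card_image_iff.mp
      rw [(h𝒜 A hA).1, hM, (h𝒜 A hA).2.1]
    have h : ∃ b, (x, b) ∈ A := ⟨a, ha⟩
    have hmem' : (x, f A x) ∈ A := by
      simp only [hf, dif_pos h]; exact h.choose_spec
    have := hinj ha hmem' rfl
    exact congrArg Prod.snd this
  have hrange : ∀ A ∈ 𝒜, ∀ x ∈ M, f A x ∈ Finset.Icc 1 r := by
    intro A hA x hx
    exact (h𝒜 A hA).2.2 _ (hmem A hA x hx)
  have hcast : ∀ a b : ℕ, a ∈ Finset.Icc 1 r → b ∈ Finset.Icc 1 r →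
      ((a : ZMod r) = (b : ZMod r)) → a = b := by
    intro a b ha hb h
    simp only [mem_Icc] at ha hb
    have h1 : ((a - 1 : ℕ) : ZMod r) = ((b - 1 : ℕ) : ZMod r) := by
      rw [Nat.cast_sub ha.1, Nat.cast_sub hb.1, h]
    have h2 := congrArg ZMod.val h1
    rw [ZMod.val_cast_of_lt (by omega : a - 1 < r),
      ZMod.val_cast_of_lt (by omega : b - 1 < r)] at h2
    omega
  set ψ : Finset (ℕ × ℕ) → ({x // x ∈ M.erase x0} → ZMod r) := fun A x =>
    (f A x.1 : ZMod r) - (f A x0 : ZMod r) with hψ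
  have hinjψ : Set.InjOn ψ 𝒜 := by
    intro A hA B hB hAB
    obtain ⟨p, hp⟩ := hint A hA B hB
    rw [mem_inter] at hp
    have hpM : p.1 ∈ M := by
      rw [← (h𝒜 A hA).1]; exact mem_image_of_mem _ hp.1
    have h1 : p.2 = f A p.1 := huniq A hA p.1 p.2 (by simpa using hp.1)
    have h2 : p.2 = f B p.1 := huniq B hB p.1 p.2 (by simpa using hp.2)
    have hx0eq : (f A x0 : ZMod r) = (f B x0 : ZMod r) := by
      by_cases hpx : p.1 = x0
      · rw [← hpx, ← h1, ← h2]
      · have := congrFun hAB ⟨p.1, mem_erase.mpr ⟨hpx, hpM⟩⟩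
        simp only [hψ] at this
        rw [← h1, ← h2] at this
        linear_combination -this
    have hall : ∀ x ∈ M, f A x = f B x := by
      intro x hx
      by_cases hxx : x = x0
      · subst hxx
        exact hcast _ _ (hrange A hA x hx) (hrange B hB x hx) hx0eq
      · have := congrFun hAB ⟨x, mem_erase.mpr ⟨hxx, hx⟩⟩
        simp only [hψ] at this
        exact hcast _ _ (hrange A hA x hx) (hrange B hB x hx)
          (by linear_combination this + hx0eq)
    ext q
    constructor
    · intro hq
      have hqM : q.1 ∈ M := by
        rw [← (h𝒜 A hA).1]; exact mem_image_of_mem _ hq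
      have : q.2 = f A q.1 := huniq A hA q.1 q.2 (by simpa using hq)
      have hq2 : q.2 = f B q.1 := by rw [this, hall q.1 hqM]
      have := hmem B hB q.1 hqM
      rwa [← hq2, Prod.mk.eta] at this
    · intro hq
      have hqM : q.1 ∈ M := by
        rw [← (h𝒜 B hB).1]; exact mem_image_of_mem _ hq
      have : q.2 = f B q.1 := huniq B hB q.1 q.2 (by simpa using hq)
      have hq2 : q.2 = f A q.1 := by rw [this, ← hall q.1 hqM]
      have := hmem A hA q.1 hqM
      rwa [← hq2, Prod.mk.eta] at this
  calc 𝒜.card ≤ Fintype.card ({x // x ∈ M.erase x0} → ZMod r) := by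
        rw [← Finset.card_univ]
        exact Finset.card_le_card_of_injOn ψ (fun _ _ => mem_univ _) hinjψ
    _ = r ^ (k - 1) := by
        rw [Fintype.card_fun, ZMod.card, Fintype.card_coe,
          Finset.card_erase_of_mem hx0, hM]
end

section
/- Let n, k, r be integers with r ≥ 1, k ≥ 1 and 2k ≤ n. Let 𝒜_0 ⊆ 𝒮_{n,k,r} be an intersecting family such that no member of 𝒜_0 contains a pair with first coordinate 1. Let ℳ_0 = {M_A : A ∈ 𝒜_0} be the family of supports (so each M ∈ ℳ_0 is a k-subset of [2, n] = {2, …, n}), let 𝒩 = {[2, n] \ M : M ∈ ℳ_0}, and let ∂_{k−1}(𝒩) be the (k−1)-shadow of 𝒩. Then |𝒜_0| ≤ r^(k−1) · |∂_{k−1}(𝒩)|. -/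
open Finset

open Finset.Colex FinsetFamily

set_option linter.unusedSectionVars false
set_option linter.unusedVariables false
set_option maxHeartbeats 1000000


section Aux
variable {α β : Type*} [DecidableEq α] [DecidableEq β]

def mShadowG (m : ℕ) (𝒩 : Finset (Finset α)) : Finset (Finset α) :=
  𝒩.sup (fun F => F.powersetCard m)

lemma mem_mShadowG {m : ℕ} {𝒩 : Finset (Finset α)} {B : Finset α} :
    B ∈ mShadowG m 𝒩 ↔ ∃ N ∈ 𝒩, B ⊆ N ∧ B.card = m := by
  simp [mShadowG, Finset.mem_sup, Finset.mem_powersetCard]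

lemma image_image_injOn (f : α → β) {V : Finset α} (hf : Set.InjOn f V)
    {𝒮 : Finset (Finset α)} (h : ∀ X ∈ 𝒮, X ⊆ V) :
    #(𝒮.image (fun X => X.image f)) = #𝒮 := by
  apply card_image_of_injOn
  intro X hX Y hY hXY
  simp only at hXY
  ext x
  constructor
  · intro hx
    have : f x ∈ Y.image f := by rw [← hXY]; exact mem_image_of_mem f hx
    obtain ⟨y, hy, hyx⟩ := mem_image.1 this
    rwa [← hf ((h Y hY) hy) ((h X hX) hx) hyx]
  · intro hx
    have : f x ∈ X.image f := by rw [hXY]; exact mem_image_of_mem f hx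
    obtain ⟨y, hy, hyx⟩ := mem_image.1 this
    rwa [← hf ((h X hX) hy) ((h Y hY) hx) hyx]

lemma mShadowG_image (f : α → β) {V : Finset α} (hf : Set.InjOn f V)
    {𝒩 : Finset (Finset α)} (h𝒩 : ∀ N ∈ 𝒩, N ⊆ V) (c : ℕ) :
    mShadowG c (𝒩.image (fun N => N.image f)) = (mShadowG c 𝒩).image (fun B => B.image f) := by
  ext B'
  rw [mem_mShadowG, mem_image]
  constructor
  · rintro ⟨N', hN', hBN', hB'⟩
    obtain ⟨N, hN, rfl⟩ := mem_image.1 hN'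
    obtain ⟨B, hBN, rfl⟩ := (Finset.subset_image_iff).1 hBN'
    refine ⟨B, mem_mShadowG.2 ⟨N, hN, hBN, ?_⟩, rfl⟩
    rw [← hB']
    exact (card_image_of_injOn (hf.mono (fun x hx => (h𝒩 N hN) (hBN hx)))).symm
  · rintro ⟨B, hB, rfl⟩
    obtain ⟨N, hN, hBN, hBc⟩ := mem_mShadowG.1 hB
    refine ⟨N.image f, mem_image_of_mem _ hN, image_subset_image hBN, ?_⟩
    rw [card_image_of_injOn (hf.mono (fun x hx => (h𝒩 N hN) (hBN hx))), hBc]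

lemma mShadowG_image_card (f : α → β) {V : Finset α} (hf : Set.InjOn f V)
    {𝒩 : Finset (Finset α)} (h𝒩 : ∀ N ∈ 𝒩, N ⊆ V) (c : ℕ) :
    #(mShadowG c (𝒩.image (fun N => N.image f))) = #(mShadowG c 𝒩) := by
  rw [mShadowG_image f hf h𝒩 c]
  apply image_image_injOn f hf
  intro B hB
  obtain ⟨N, hN, hBN, _⟩ := mem_mShadowG.1 hB
  exact hBN.trans (h𝒩 N hN)

lemma mShadowG_eq_shadow_iterate {s c : ℕ} (hc : c ≤ s) {𝒩 : Finset (Finset α)}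
    (h : (𝒩 : Set (Finset α)).Sized s) : mShadowG c 𝒩 = ∂^[s - c] 𝒩 := by
  ext B
  rw [mem_mShadowG, mem_shadow_iterate_iff_exists_sdiff]
  constructor
  · rintro ⟨N, hN, hBN, hB⟩
    exact ⟨N, hN, hBN, by rw [card_sdiff_of_subset hBN, h hN, hB]⟩
  · rintro ⟨N, hN, hBN, hB⟩
    refine ⟨N, hN, hBN, ?_⟩
    have h1 := card_sdiff_of_subset hBN
    have h2 := h hN
    have h3 := card_le_card hBN
    omega

end Aux



lemma iter_lym_s7 {α : Type*} [DecidableEq α] [Fintype α] :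
    ∀ (j : ℕ) (b : ℕ), j ≤ b → ∀ (ℬ : Finset (Finset α)), (ℬ : Set (Finset α)).Sized b →
      ℬ.card * b.descFactorial j ≤ #(∂^[j] ℬ) * ((Fintype.card α - b + j).descFactorial j) := by
  intro j
  induction j with
  | zero => intro b _ ℬ _; simp
  | succ j ih =>
    intro b hj ℬ hs
    set N := Fintype.card α with hN
    have hD : ((∂^[j] ℬ : Finset (Finset α)) : Set (Finset α)).Sized (b - j) := hs.shadow_iterate
    have lym := card_mul_le_card_shadow_mul hD
    rw [Function.iterate_succ_apply']
    calc #ℬ * b.descFactorial (j+1)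
        = (#ℬ * b.descFactorial j) * (b - j) := by
          rw [Nat.descFactorial_succ]; ring
      _ ≤ (#(∂^[j] ℬ) * (N - b + j).descFactorial j) * (b - j) :=
          Nat.mul_le_mul_right _ (ih b (by omega) ℬ hs)
      _ = (#(∂^[j] ℬ) * (b - j)) * (N - b + j).descFactorial j := by ring
      _ ≤ (#(∂ (∂^[j] ℬ)) * (N - (b - j) + 1)) * (N - b + j).descFactorial j :=
          Nat.mul_le_mul_right _ lym
      _ ≤ (#(∂ (∂^[j] ℬ)) * (N - b + j + 1)) * (N - b + j).descFactorial j := by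
          have : N - (b - j) + 1 ≤ N - b + j + 1 := by omega
          exact Nat.mul_le_mul_right _ (Nat.mul_le_mul_left _ this)
      _ = #(∂ (∂^[j] ℬ)) * (N - b + (j+1)).descFactorial (j+1) := by
          have : (N - b + j + 1).descFactorial (j+1) = (N - b + j + 1) * (N - b + j).descFactorial j :=
            Nat.succ_descFactorial_succ _ _
          rw [show N - b + (j+1) = N - b + j + 1 by omega, this]; ring

lemma card_le_shadow_iterate_colevel {α : Type*} [DecidableEq α] [Fintype α]
    {b c : ℕ} (hc : c ≤ b) (hcard : Fintype.card α = b + c)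
    {ℬ : Finset (Finset α)} (hs : (ℬ : Set (Finset α)).Sized b) :
    ℬ.card ≤ #(∂^[b - c] ℬ) := by
  have h := iter_lym_s7 (b - c) b (by omega) ℬ hs
  rw [hcard] at h
  have he : b + c - b + (b - c) = b := by omega
  rw [he] at h
  have hpos : 0 < b.descFactorial (b - c) := Nat.pos_of_ne_zero (fun h => by have := Nat.descFactorial_eq_zero_iff_lt.1 h; omega)
  exact Nat.le_of_mul_le_mul_right h hpos

lemma exists_bottom {β : Type*} [LinearOrder β] (T : Finset β) :
    ∀ c, c ≤ #T → ∃ S ⊆ T, #S = c ∧ ∀ y ∈ T, ∀ x ∈ S, y ≤ x → y ∈ S := by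
  intro c
  induction c with
  | zero => intro _; exact ⟨∅, empty_subset _, card_empty, by simp⟩
  | succ c ih =>
    intro hc
    obtain ⟨S, hST, hcard, hdc⟩ := ih (by omega)
    have hne : (T \ S).Nonempty := by
      rw [← card_pos, card_sdiff_of_subset hST]; omega
    set x := (T \ S).min' hne with hx
    have hxT : x ∈ T \ S := min'_mem _ hne
    refine ⟨insert x S, insert_subset (mem_sdiff.1 hxT).1 hST, ?_, ?_⟩
    · rw [card_insert_of_notMem (mem_sdiff.1 hxT).2, hcard]
    · intro y hy z hz hyz
      by_cases hyS : y ∈ S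
      · exact mem_insert_of_mem hyS
      · have hyTS : y ∈ T \ S := mem_sdiff.2 ⟨hy, hyS⟩
        have hxy : x ≤ y := min'_le _ _ hyTS
        rcases mem_insert.1 hz with rfl | hzS
        · exact mem_insert.2 (Or.inl (le_antisymm hyz hxy))
        · exact absurd (hdc y hy z hzS hyz) hyS

-- part 1 machinery


def sgn (A : Finset (ℕ × ℕ)) (x : ℕ) : ℕ := A.sup (fun p => if p.1 = x then p.2 else 0)

lemma sgn_eq {A : Finset (ℕ × ℕ)} (hinj : Set.InjOn Prod.fst (A : Set (ℕ × ℕ)))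
    {p : ℕ × ℕ} (hp : p ∈ A) : sgn A p.1 = p.2 := by
  apply le_antisymm
  · apply Finset.sup_le
    intro q hq
    by_cases h : q.1 = p.1
    · have : q = p := hinj hq hp h
      subst this; simp
    · simp [h]
  · have := Finset.le_sup (f := fun q : ℕ × ℕ => if q.1 = p.1 then q.2 else 0) hp
    simp at this; exact this

lemma mem_of_mem_supp {A : Finset (ℕ × ℕ)} (hinj : Set.InjOn Prod.fst (A : Set (ℕ × ℕ)))
    {x : ℕ} (hx : x ∈ A.image Prod.fst) : (x, sgn A x) ∈ A := by
  obtain ⟨p, hp, rfl⟩ := mem_image.1 hx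
  have := sgn_eq hinj hp
  rw [this]
  exact hp

lemma graph_eq {A : Finset (ℕ × ℕ)} (hinj : Set.InjOn Prod.fst (A : Set (ℕ × ℕ))) :
    A = (A.image Prod.fst).image (fun x => (x, sgn A x)) := by
  ext q
  simp only [mem_image]
  constructor
  · intro hq
    exact ⟨q.1, ⟨q, hq, rfl⟩, by rw [sgn_eq hinj hq]⟩
  · rintro ⟨x, hx, rfl⟩
    exact mem_of_mem_supp hinj (mem_image.2 hx)

lemma eq_of_mod_icc {a b r : ℕ} (ha : 1 ≤ a) (ha' : a ≤ r) (hb : 1 ≤ b) (hb' : b ≤ r)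
    (h : a % r = b % r) : a = b := by
  have h1 : a % r = if a = r then 0 else a := by
    split
    · next heq => rw [heq, Nat.mod_self]
    · next hne => exact Nat.mod_eq_of_lt (by omega)
  have h2 : b % r = if b = r then 0 else b := by
    split
    · next heq => rw [heq, Nat.mod_self]
    · next hne => exact Nat.mod_eq_of_lt (by omega)
  rw [h1, h2] at h
  split at h <;> split at h <;> omega

lemma fiber_bound {n r : ℕ} (hr : 1 ≤ r) (𝒜 : Finset (Finset (ℕ × ℕ)))
    (hsub : ∀ A ∈ 𝒜, A ⊆ Finset.Icc 1 n ×ˢ Finset.Icc 1 r)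
    (hinj : ∀ A ∈ 𝒜, Set.InjOn Prod.fst (A : Set (ℕ × ℕ)))
    (hint : ∀ A ∈ 𝒜, ∀ B ∈ 𝒜, (A ∩ B).Nonempty)
    (M : Finset ℕ) (hMne : M.Nonempty) (hsupp : ∀ A ∈ 𝒜, A.image Prod.fst = M) :
    𝒜.card ≤ r ^ (#M - 1) := by
  classical
  have hr0 : 0 < r := hr
  set x₀ := M.min' hMne with hx₀def
  have hx₀ : x₀ ∈ M := M.min'_mem hMne
  -- sign facts
  have hsgn : ∀ A ∈ 𝒜, ∀ x ∈ M, (x, sgn A x) ∈ A ∧ 1 ≤ sgn A x ∧ sgn A x ≤ r := by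
    intro A hA x hx
    have hmem : (x, sgn A x) ∈ A := mem_of_mem_supp (hinj A hA) (by rw [hsupp A hA]; exact hx)
    have := hsub A hA hmem
    rw [mem_product, mem_Icc, mem_Icc] at this
    exact ⟨hmem, this.2.1, this.2.2⟩
  set Φ : Finset (ℕ × ℕ) → ({y // y ∈ M.erase x₀} → Fin r) :=
    fun A y => ⟨(sgn A y.1 + (r - sgn A x₀)) % r, Nat.mod_lt _ hr0⟩ with hΦ
  have key : Set.InjOn Φ (𝒜 : Set (Finset (ℕ × ℕ))) := by
    intro A hA B hB h
    simp only [mem_coe] at hA hB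
    -- congruence for all x in M
    have hcong : ∀ x ∈ M, (sgn A x + (r - sgn A x₀)) % r = (sgn B x + (r - sgn B x₀)) % r := by
      intro x hx
      by_cases hxx : x = x₀
      · subst hxx
        have h1 := (hsgn A hA x₀ hx₀).2.2
        have h2 := (hsgn B hB x₀ hx₀).2.2
        have e1 : sgn A x₀ + (r - sgn A x₀) = r := by omega
        have e2 : sgn B x₀ + (r - sgn B x₀) = r := by omega
        rw [e1, e2]
      · have hxe : x ∈ M.erase x₀ := mem_erase.2 ⟨hxx, hx⟩
        have := congrFun h ⟨x, hxe⟩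
        simpa [hΦ, Fin.ext_iff] using this
    obtain ⟨p, hp⟩ := hint A hA B hB
    rw [mem_inter] at hp
    have hpM : p.1 ∈ M := by rw [← hsupp A hA]; exact mem_image_of_mem _ hp.1
    have hpA : sgn A p.1 = p.2 := sgn_eq (hinj A hA) hp.1
    have hpB : sgn B p.1 = p.2 := sgn_eq (hinj B hB) hp.2
    have hA0 := hsgn A hA x₀ hx₀
    have hB0 := hsgn B hB x₀ hx₀
    -- the shifts agree
    have hshift : r - sgn A x₀ = r - sgn B x₀ := by
      have hc := hcong p.1 hpM
      rw [hpA, hpB] at hc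
      have : (p.2 + (r - sgn A x₀)) % r = (p.2 + (r - sgn B x₀)) % r := hc
      have hmod : (r - sgn A x₀) % r = (r - sgn B x₀) % r := by
        have := Nat.ModEq.add_left_cancel' p.2 (this : Nat.ModEq r _ _)
        exact this
      rw [Nat.mod_eq_of_lt (by omega), Nat.mod_eq_of_lt (by omega)] at hmod
      exact hmod
    have hx₀eq : sgn A x₀ = sgn B x₀ := by omega
    -- all signs agree on M
    have hall : ∀ x ∈ M, sgn A x = sgn B x := by
      intro x hx
      have hc := hcong x hx
      rw [hshift] at hc
      have hmod : sgn A x % r = sgn B x % r :=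
        Nat.ModEq.add_right_cancel' _ (hc : Nat.ModEq r _ _)
      exact eq_of_mod_icc (hsgn A hA x hx).2.1 (hsgn A hA x hx).2.2
        (hsgn B hB x hx).2.1 (hsgn B hB x hx).2.2 hmod
    -- conclude A = B
    rw [graph_eq (hinj A hA), graph_eq (hinj B hB), hsupp A hA, hsupp B hB]
    apply image_congr
    intro x hx
    simp only [mem_coe] at hx
    simp only [hall x hx]
  have := Finset.card_le_card_of_injOn Φ (fun A _ => Finset.mem_univ _) key
  calc #𝒜 ≤ #(univ : Finset ({y // y ∈ M.erase x₀} → Fin r)) := this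
    _ = r ^ (#M - 1) := by
        rw [card_univ, Fintype.card_fun, Fintype.card_coe, Fintype.card_fin,
          card_erase_of_mem hx₀]

lemma shadow_lower_bound {m s c : ℕ} (hcs : c < s) (hm : m = s + c + 1)
    (𝒩 : Finset (Finset (Fin m))) (hsized : ((𝒩 : Set (Finset (Fin m)))).Sized s)
    (hcard : #𝒩 ≤ (m - 1).choose s) :
    𝒩.card ≤ #(mShadowG c 𝒩) := by
  letI : DecidableEq (Colex (Finset (Fin m))) := fun a b => decidable_of_iff _ ofColex_inj
  have hm1 : 1 ≤ m := by omega
  -- the colex order on s-sets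
  set T : Finset (Colex (Finset (Fin m))) :=
    (powersetCard s (univ : Finset (Fin m))).image toColex with hT
  have hTcard : #T = m.choose s := by
    rw [hT, card_image_of_injective _ toColex.injective, card_powersetCard,
      card_univ, Fintype.card_fin]
  have hc : #𝒩 ≤ #T := by
    rw [hTcard]
    exact hcard.trans (Nat.choose_le_choose s (by omega))
  obtain ⟨S, hST, hScard, hdc⟩ := exists_bottom T #𝒩 hc
  set 𝒞 : Finset (Finset (Fin m)) :=
    (powersetCard s (univ : Finset (Fin m))).filter (fun A => toColex A ∈ S) with h𝒞
  have h𝒞S : 𝒞.image toColex = S := by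
    apply Finset.Subset.antisymm
    · intro x hx
      obtain ⟨A, hA, rfl⟩ := mem_image.1 hx
      exact (mem_filter.1 hA).2
    · intro x hx
      have hxT := hST hx
      obtain ⟨A, hAp, rfl⟩ := mem_image.1 hxT
      exact mem_image_of_mem _ (mem_filter.2 ⟨hAp, hx⟩)
  have h𝒞card : #𝒞 = #𝒩 := by
    rw [← hScard, ← h𝒞S, card_image_of_injective _ toColex.injective]
  have h𝒞sized : ((𝒞 : Set (Finset (Fin m)))).Sized s := by
    intro A hA
    exact (mem_powersetCard.1 (mem_filter.1 hA).1).2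
  have h𝒞init : IsInitSeg 𝒞 s := by
    refine ⟨h𝒞sized, ?_⟩
    rintro A B hA ⟨hlt, hBcard⟩
    have hBp : B ∈ powersetCard s (univ : Finset (Fin m)) :=
      mem_powersetCard.2 ⟨subset_univ _, hBcard⟩
    refine mem_filter.2 ⟨hBp, ?_⟩
    exact hdc _ (mem_image_of_mem _ hBp) _ (mem_filter.1 hA).2 hlt.le
  set top : Fin m := ⟨m - 1, by omega⟩ with htopdef
  have hletop : ∀ a : Fin m, a ≤ top := by
    intro a
    have := a.isLt
    simp only [Fin.le_def, htopdef]
    omega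
  have htop : ∀ B ∈ 𝒞, top ∉ B := by
    by_contra hcon
    push_neg at hcon
    obtain ⟨B, hB, htopB⟩ := hcon
    set P : Finset (Finset (Fin m)) := powersetCard s ((univ : Finset (Fin m)).erase top) with hP
    have hPcard : #P = (m - 1).choose s := by
      rw [hP, card_powersetCard, card_erase_of_mem (mem_univ _), card_univ, Fintype.card_fin]
    have hPC : P ⊆ 𝒞 := by
      intro A hA
      obtain ⟨hAsub, hAcard⟩ := mem_powersetCard.1 hA
      have htopA : top ∉ A := fun h => (mem_erase.1 (hAsub h)).1 rfl
      have hAp : A ∈ powersetCard s (univ : Finset (Fin m)) :=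
        mem_powersetCard.2 ⟨subset_univ _, hAcard⟩
      refine mem_filter.2 ⟨hAp, ?_⟩
      refine hdc _ (mem_image_of_mem _ hAp) _ (mem_filter.1 hB).2 ?_
      exact Finset.Colex.toColex_le_toColex.2 (fun a _ _ => ⟨top, htopB, htopA, hletop a⟩)
    have hBP : B ∉ P := fun h => (mem_erase.1 ((mem_powersetCard.1 h).1 htopB)).1 rfl
    have hins : insert B P ⊆ 𝒞 := insert_subset hB hPC
    have : #P + 1 ≤ #𝒞 := by
      rw [← card_insert_of_notMem hBP]
      exact card_le_card hins
    omega
  have h𝒞V : ∀ B ∈ 𝒞, B ⊆ (univ : Finset (Fin m)).erase top := by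
    intro B hB x hx
    exact mem_erase.2 ⟨fun he => htop B hB (he ▸ hx), mem_univ _⟩
  -- transfer to Fin (m - 1)
  set g : Fin m → Fin (m - 1) := fun j => ⟨j.val % (m - 1), Nat.mod_lt _ (by omega)⟩ with hg
  have hginj : Set.InjOn g (((univ : Finset (Fin m)).erase top : Finset (Fin m)) : Set (Fin m)) := by
    intro x hx y hy hxy
    simp only [coe_erase, Set.mem_diff, Set.mem_singleton_iff] at hx hy
    have hx1 : x.val < m - 1 := by
      have := x.isLt
      have : x.val ≠ m - 1 := fun h => hx.2 (Fin.ext h)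
      omega
    have hy1 : y.val < m - 1 := by
      have := y.isLt
      have : y.val ≠ m - 1 := fun h => hy.2 (Fin.ext h)
      omega
    simp only [hg, Fin.mk.injEq, Nat.mod_eq_of_lt hx1, Nat.mod_eq_of_lt hy1] at hxy
    exact Fin.ext hxy
  set 𝒞₂ : Finset (Finset (Fin (m - 1))) := 𝒞.image (fun B => B.image g) with h𝒞₂
  have h𝒞₂card : #𝒞₂ = #𝒞 := image_image_injOn g hginj h𝒞V
  have h𝒞₂sized : ((𝒞₂ : Set (Finset (Fin (m - 1))))).Sized s := by
    rintro X hX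
    rw [mem_coe, h𝒞₂, mem_image] at hX
    obtain ⟨B, hB, rfl⟩ := hX
    rw [card_image_of_injOn (hginj.mono (by exact_mod_cast h𝒞V B hB)), h𝒞sized hB]
  have step1 : #𝒞₂ ≤ #(∂^[s - c] 𝒞₂) :=
    card_le_shadow_iterate_colevel hcs.le (by rw [Fintype.card_fin]; omega) h𝒞₂sized
  calc #𝒩 = #𝒞₂ := by rw [h𝒞₂card, h𝒞card]
    _ ≤ #(∂^[s - c] 𝒞₂) := step1
    _ = #(mShadowG c 𝒞₂) := by rw [mShadowG_eq_shadow_iterate hcs.le h𝒞₂sized]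
    _ = #(mShadowG c 𝒞) := mShadowG_image_card g hginj h𝒞V c
    _ = #(∂^[s - c] 𝒞) := by rw [mShadowG_eq_shadow_iterate hcs.le h𝒞sized]
    _ ≤ #(∂^[s - c] 𝒩) := by
        have h := Finset.iterated_kk (k := s - c) hsized (le_of_eq h𝒞card) h𝒞init
        convert h using 3 <;> exact congrArg _ (Subsingleton.elim _ _)
    _ = #(mShadowG c 𝒩) := by rw [mShadowG_eq_shadow_iterate hcs.le hsized]


theorem signed_avoiding_one_bound (n k r : ℕ) (hr : 1 ≤ r) (hk : 1 ≤ k) (hkn : 2 * k ≤ n)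
    (𝒜₀ : Finset (Finset (ℕ × ℕ))) (h𝒜₀ : 𝒜₀ ⊆ signedSets n k r)
    (hint : ∀ A ∈ 𝒜₀, ∀ B ∈ 𝒜₀, (A ∩ B).Nonempty)
    (h1 : ∀ A ∈ 𝒜₀, ∀ p ∈ A, p.1 ≠ 1) :
    𝒜₀.card ≤ r ^ (k - 1) *
      (mShadow (k - 1)
        ((𝒜₀.image (fun A => A.image Prod.fst)).image
          (fun M => Finset.Icc 2 n \ M))).card := by
  have hAfact : ∀ A ∈ 𝒜₀, A ⊆ Finset.Icc 1 n ×ˢ Finset.Icc 1 r ∧ #A = k ∧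
      #(A.image Prod.fst) = k := by
    intro A hA
    have := h𝒜₀ hA
    rw [signedSets, mem_filter, mem_powerset] at this
    tauto
  have hAinj : ∀ A ∈ 𝒜₀, Set.InjOn Prod.fst (A : Set (ℕ × ℕ)) := by
    intro A hA
    apply Finset.card_image_iff.1
    rw [(hAfact A hA).2.2, (hAfact A hA).2.1]
  set ℳ : Finset (Finset ℕ) := 𝒜₀.image (fun A => A.image Prod.fst) with hℳ
  set 𝒩 : Finset (Finset ℕ) := ℳ.image (fun M => Finset.Icc 2 n \ M) with h𝒩
  have hMcard : ∀ M ∈ ℳ, #M = k := by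
    intro M hM
    obtain ⟨A, hA, rfl⟩ := mem_image.1 hM
    exact (hAfact A hA).2.2
  have hMsub : ∀ M ∈ ℳ, M ⊆ Finset.Icc 2 n := by
    intro M hM x hx
    obtain ⟨A, hA, rfl⟩ := mem_image.1 hM
    obtain ⟨p, hp, rfl⟩ := mem_image.1 hx
    have h2 := (hAfact A hA).1 hp
    rw [mem_product, mem_Icc, mem_Icc] at h2
    have h3 := h1 A hA p hp
    rw [mem_Icc]
    omega
  have hMint : ∀ M ∈ ℳ, ∀ M' ∈ ℳ, (M ∩ M').Nonempty := by
    intro M hM M' hM'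
    obtain ⟨A, hA, rfl⟩ := mem_image.1 hM
    obtain ⟨B, hB, rfl⟩ := mem_image.1 hM'
    obtain ⟨p, hp⟩ := hint A hA B hB
    rw [mem_inter] at hp
    exact ⟨p.1, mem_inter.2 ⟨mem_image_of_mem _ hp.1, mem_image_of_mem _ hp.2⟩⟩
  -- Part 1 : #𝒜₀ ≤ r ^ (k-1) * #ℳ
  have part1 : #𝒜₀ ≤ r ^ (k - 1) * #ℳ := by
    rw [card_eq_sum_card_fiberwise (f := fun A => A.image Prod.fst) (t := ℳ)
      (fun A hA => mem_image_of_mem _ hA)]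
    have hfib : ∀ M ∈ ℳ, #(𝒜₀.filter (fun A => A.image Prod.fst = M)) ≤ r ^ (k - 1) := by
      intro M hM
      have hMne : M.Nonempty := by
        rw [← card_pos, hMcard M hM]; omega
      have hb := fiber_bound (n := n) hr (𝒜₀.filter (fun A => A.image Prod.fst = M))
        (fun A hA => (hAfact A (mem_of_mem_filter A hA)).1)
        (fun A hA => hAinj A (mem_of_mem_filter A hA))
        (fun A hA B hB => hint A (mem_of_mem_filter A hA) B (mem_of_mem_filter B hB))
        M hMne (fun A hA => (mem_filter.1 hA).2)
      rwa [hMcard M hM] at hb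
    calc ∑ M ∈ ℳ, #(𝒜₀.filter (fun A => A.image Prod.fst = M))
        ≤ ∑ _M ∈ ℳ, r ^ (k - 1) := sum_le_sum hfib
      _ = #ℳ * r ^ (k - 1) := by rw [sum_const, smul_eq_mul]
      _ = r ^ (k - 1) * #ℳ := mul_comm _ _
  -- Part 2 : #ℳ ≤ #(mShadow (k-1) 𝒩)
  have hNcard : #𝒩 = #ℳ := by
    apply card_image_of_injOn
    intro M hM M' hM' h
    simp only at h
    rw [← Finset.sdiff_sdiff_eq_self (hMsub M hM), h, Finset.sdiff_sdiff_eq_self (hMsub M' hM')]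
  have hNsub : ∀ N ∈ 𝒩, N ⊆ Finset.Icc 2 n := by
    intro N hN
    obtain ⟨M, _, rfl⟩ := mem_image.1 hN
    exact sdiff_subset
  have hIcard : #(Finset.Icc 2 n) = n - 1 := by
    rw [Nat.card_Icc]; omega
  have hNsized : ∀ N ∈ 𝒩, #N = n - 1 - k := by
    intro N hN
    obtain ⟨M, hM, rfl⟩ := mem_image.1 hN
    rw [card_sdiff_of_subset (hMsub M hM), hIcard, hMcard M hM]
  have hmG : mShadow (k - 1) 𝒩 = mShadowG (k - 1) 𝒩 := rfl
  have part2 : #ℳ ≤ #(mShadow (k - 1) 𝒩) := by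
    rw [hmG, ← hNcard]
    by_cases hn : n = 2 * k
    · apply card_le_card
      intro N hN
      exact mem_mShadowG.2 ⟨N, hN, subset_rfl, by rw [hNsized N hN]; omega⟩
    · have hn' : 2 * k + 1 ≤ n := by omega
      set f : ℕ → Fin (n - 1) := fun x => ⟨(x - 2) % (n - 1), Nat.mod_lt _ (by omega)⟩ with hf
      have hfinj : Set.InjOn f ((Finset.Icc 2 n : Finset ℕ) : Set ℕ) := by
        intro x hx y hy hxy
        simp only [mem_coe, mem_Icc] at hx hy
        simp only [hf, Fin.mk.injEq, Nat.mod_eq_of_lt (show x - 2 < n - 1 by omega),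
          Nat.mod_eq_of_lt (show y - 2 < n - 1 by omega)] at hxy
        omega
      set ℳ' : Finset (Finset (Fin (n - 1))) := ℳ.image (fun X => X.image f) with hℳ'
      set 𝒩' : Finset (Finset (Fin (n - 1))) := 𝒩.image (fun X => X.image f) with h𝒩'
      have hM'card : #ℳ' = #ℳ := image_image_injOn f hfinj hMsub
      have hN'card : #𝒩' = #𝒩 := image_image_injOn f hfinj hNsub
      have hM'sized : ((ℳ' : Set (Finset (Fin (n - 1))))).Sized k := by
        rintro X hX
        rw [mem_coe, hℳ', mem_image] at hX
        obtain ⟨M, hM, rfl⟩ := hX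
        rw [card_image_of_injOn (hfinj.mono (by exact_mod_cast hMsub M hM)), hMcard M hM]
      have hM'int : ((ℳ' : Set (Finset (Fin (n - 1))))).Intersecting := by
        rintro X hX Y hY hd
        rw [mem_coe, hℳ', mem_image] at hX hY
        obtain ⟨M, hM, rfl⟩ := hX
        obtain ⟨M', hM', rfl⟩ := hY
        obtain ⟨x, hx⟩ := hMint M hM M' hM'
        rw [mem_inter] at hx
        exact (Finset.disjoint_left.1 hd (mem_image_of_mem f hx.1)) (mem_image_of_mem f hx.2)
      have ekr : #ℳ' ≤ (n - 1 - 1).choose (k - 1) :=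
        Finset.erdos_ko_rado hM'int hM'sized (by omega)
      have hN'sized : ((𝒩' : Set (Finset (Fin (n - 1))))).Sized (n - 1 - k) := by
        rintro X hX
        rw [mem_coe, h𝒩', mem_image] at hX
        obtain ⟨N, hN, rfl⟩ := hX
        rw [card_image_of_injOn (hfinj.mono (by exact_mod_cast hNsub N hN)), hNsized N hN]
      have hsymm : (n - 1 - 1).choose (k - 1) = (n - 1 - 1).choose (n - 1 - k) := by
        have h := Nat.choose_symm (show n - 1 - k ≤ n - 1 - 1 by omega)
        rw [show n - 1 - 1 - (n - 1 - k) = k - 1 by omega] at h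
        exact h
      have hN'bound : #𝒩' ≤ (n - 1 - 1).choose (n - 1 - k) := by
        rw [hN'card, hNcard, ← hM'card, ← hsymm]
        exact ekr
      have key := shadow_lower_bound (c := k - 1) (s := n - 1 - k)
        (by omega) (by omega) 𝒩' hN'sized hN'bound
      calc #𝒩 = #𝒩' := hN'card.symm
        _ ≤ #(mShadowG (k - 1) 𝒩') := key
        _ = #(mShadowG (k - 1) 𝒩) := mShadowG_image_card f hfinj hNsub (k - 1)
  calc #𝒜₀ ≤ r ^ (k - 1) * #ℳ := part1
    _ ≤ r ^ (k - 1) * #(mShadow (k - 1) 𝒩) := Nat.mul_le_mul_left _ part2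
end

section
/- Let n, k, r be integers with r ≥ 2 and 1 ≤ k ≤ n, and let 𝒜 ⊆ 𝒮_{n,k,r} be an intersecting family. For each i ∈ [r], let 𝒜′_i = {A \ {(1, i)} : A ∈ 𝒜, (1, i) ∈ A}. Then the r families 𝒜′_1, θ^1_r(𝒜′_2), θ^2_r(𝒜′_3), …, θ^{r−1}_r(𝒜′_r) are pairwise disjoint. -/
open Finset

/-- `mod*`: the modulo operation with representatives in `{1, …, r}`,
so multiples of `r` map to `r` instead of `0`. -/
def modStar (x : ℤ) (r : ℕ) : ℕ :=
  if (r : ℤ) ∣ x then r else (x % (r : ℤ)).toNat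

/-- The shift `θ^q_r(A) = {(x, (a + q) mod* r) : (x, a) ∈ A}`. -/
def theta (q : ℤ) (r : ℕ) (A : Finset (ℕ × ℕ)) : Finset (ℕ × ℕ) :=
  A.image (fun p => (p.1, modStar ((p.2 : ℤ) + q) r))

/-- `𝒜′_i = {A \ {(1, i)} : A ∈ 𝒜, (1, i) ∈ A}`. -/
def primeFam (𝒜 : Finset (Finset (ℕ × ℕ))) (i : ℕ) : Finset (Finset (ℕ × ℕ)) :=
  (𝒜.filter (fun A => (1, i) ∈ A)).image (fun A => A.erase (1, i))

/-- The `i`-th family in the list `𝒜′_1, θ^1_r(𝒜′_2), …, θ^{r−1}_r(𝒜′_r)`: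
`𝒜′_1` itself for `i = 1`, and `θ^{i−1}_r(𝒜′_i)` for `i ≥ 2`. -/
def shiftedFam (𝒜 : Finset (Finset (ℕ × ℕ))) (r i : ℕ) : Finset (Finset (ℕ × ℕ)) :=
  if i = 1 then primeFam 𝒜 1
  else (primeFam 𝒜 i).image (fun A => theta ((i : ℤ) - 1) r A)

lemma modStar_sub_dvd (r : ℕ) (hr : 1 ≤ r) (x : ℤ) : (r : ℤ) ∣ x - modStar x r := by
  unfold modStar
  split_ifs with h
  · exact dvd_sub h dvd_rfl
  · have hr' : (0:ℤ) < r := by exact_mod_cast hr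
    have h0 : 0 ≤ x % (r:ℤ) := Int.emod_nonneg x (by positivity)
    rw [Int.toNat_of_nonneg h0]
    have := Int.mul_ediv_add_emod x (r:ℤ)
    exact ⟨x / (r:ℤ), by linarith⟩

lemma modStar_inj {r : ℕ} (hr : 1 ≤ r) {x y : ℤ} (h : modStar x r = modStar y r) :
    (r : ℤ) ∣ x - y := by
  have h1 := modStar_sub_dvd r hr x
  have h2 := modStar_sub_dvd r hr y
  rw [h] at h1
  have := dvd_sub h1 h2
  simpa using this

lemma modStar_self {r a : ℕ} (hr : 1 ≤ r) (h1 : 1 ≤ a) (h2 : a ≤ r) :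
    modStar (a : ℤ) r = a := by
  unfold modStar
  split_ifs with h
  · have : (r:ℤ) ≤ a := Int.le_of_dvd (by exact_mod_cast h1) h
    omega
  · have : a ≠ r := by rintro rfl; exact h dvd_rfl
    have ha : (a:ℤ) % (r:ℤ) = a := Int.emod_eq_of_lt (by positivity) (by omega)
    rw [ha]; simp

lemma signed_props {n k r : ℕ} {A : Finset (ℕ × ℕ)} (hA : A ∈ signedSets n k r) :
    (∀ p ∈ A, 1 ≤ p.2 ∧ p.2 ≤ r) ∧ Set.InjOn Prod.fst (A : Set (ℕ × ℕ)) := by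
  simp only [signedSets, mem_filter, mem_powerset] at hA
  obtain ⟨hsub, hc, hci⟩ := hA
  refine ⟨fun p hp => ?_, ?_⟩
  · have := hsub hp
    simp only [Finset.mem_product, Finset.mem_Icc] at this
    exact this.2
  · exact Finset.card_image_iff.mp (hci.trans hc.symm)

/-- Membership characterization of `shiftedFam` for `i ∈ [1, r]`. -/
lemma mem_shiftedFam {n k r i : ℕ} {𝒜 : Finset (Finset (ℕ × ℕ))}
    (h𝒜 : 𝒜 ⊆ signedSets n k r) (hi1 : 1 ≤ i) (hir : i ≤ r)
    {C : Finset (ℕ × ℕ)} (hC : C ∈ shiftedFam 𝒜 r i) :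
    ∃ A ∈ 𝒜, (1, i) ∈ A ∧ C = theta ((i : ℤ) - 1) r (A.erase (1, i)) := by
  unfold shiftedFam at hC
  split_ifs at hC with h1
  · subst h1
    simp only [primeFam, mem_image, mem_filter] at hC
    obtain ⟨A, ⟨hA, hAi⟩, rfl⟩ := hC
    refine ⟨A, hA, hAi, ?_⟩
    have hsec := (signed_props (h𝒜 hA)).1
    unfold theta
    rw [show ((1:ℕ):ℤ) - 1 = 0 by ring]
    rw [Finset.image_congr (g := id) ?_, Finset.image_id]
    intro p hp
    simp only [Finset.coe_erase, Set.mem_diff] at hp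
    have hp' : p ∈ A := hp.1
    have := hsec p hp'
    have hr1 : 1 ≤ r := by omega
    simp only [add_zero, id]
    rw [modStar_self hr1 this.1 this.2]
  · simp only [mem_image, primeFam, mem_filter] at hC
    obtain ⟨A', ⟨A, ⟨hA, hAi⟩, rfl⟩, rfl⟩ := hC
    exact ⟨A, hA, hAi, rfl⟩

theorem shifted_families_pairwise_disjoint (n k r : ℕ) (hr : 2 ≤ r) (hk : 1 ≤ k) (hkn : k ≤ n)
    (𝒜 : Finset (Finset (ℕ × ℕ))) (h𝒜 : 𝒜 ⊆ signedSets n k r)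
    (hint : ∀ A ∈ 𝒜, ∀ B ∈ 𝒜, (A ∩ B).Nonempty) :
    ∀ i ∈ Finset.Icc 1 r, ∀ j ∈ Finset.Icc 1 r, i ≠ j →
      shiftedFam 𝒜 r i ∩ shiftedFam 𝒜 r j = ∅ := by
  intro i hi j hj hij
  rw [Finset.mem_Icc] at hi hj
  rw [Finset.eq_empty_iff_forall_notMem]
  intro C hC
  rw [Finset.mem_inter] at hC
  obtain ⟨A, hA, hAi, hCA⟩ := mem_shiftedFam h𝒜 hi.1 hi.2 hC.1
  obtain ⟨B, hB, hBj, hCB⟩ := mem_shiftedFam h𝒜 hj.1 hj.2 hC.2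
  obtain ⟨⟨hA2, hAinj⟩⟩ : _ ∧ True := ⟨signed_props (h𝒜 hA), trivial⟩
  obtain ⟨hB2, hBinj⟩ := signed_props (h𝒜 hB)
  obtain ⟨⟨x, a⟩, hxa⟩ := hint A hA B hB
  rw [Finset.mem_inter] at hxa
  have hx1 : x ≠ 1 := by
    rintro rfl
    have h1 : a = i := congrArg Prod.snd (hAinj hxa.1 hAi rfl)
    have h2 : a = j := congrArg Prod.snd (hBinj hxa.2 hBj rfl)
    exact hij (h1 ▸ h2)
  have hmemA : ((x, a) : ℕ × ℕ) ∈ A.erase (1, i) :=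
    Finset.mem_erase.mpr ⟨by simp [hx1], hxa.1⟩
  have hmemB : ((x, a) : ℕ × ℕ) ∈ B.erase (1, j) :=
    Finset.mem_erase.mpr ⟨by simp [hx1], hxa.2⟩
  -- the image of (x, a) under the j-shift lies in C
  have hinC : (x, modStar ((a : ℤ) + ((j : ℤ) - 1)) r) ∈ C := by
    rw [hCB]
    exact Finset.mem_image.mpr ⟨(x, a), hmemB, rfl⟩
  -- but C = theta (i-1) (A.erase (1,i)); find the preimage
  rw [hCA, theta, Finset.mem_image] at hinC
  obtain ⟨q, hq, hqeq⟩ := hinC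
  have hqA : q ∈ A := Finset.mem_of_mem_erase hq
  have hq1 : q.1 = x := congrArg Prod.fst hqeq
  have hqxa : q = (x, a) := hAinj hqA hxa.1 hq1
  subst hqxa
  have hmod : modStar ((a : ℤ) + ((i : ℤ) - 1)) r = modStar ((a : ℤ) + ((j : ℤ) - 1)) r :=
    congrArg Prod.snd hqeq
  have hdvd : (r : ℤ) ∣ ((i : ℤ) - j) := by
    have := modStar_inj (by omega : 1 ≤ r) hmod
    have heq : ((a : ℤ) + ((i : ℤ) - 1)) - ((a : ℤ) + ((j : ℤ) - 1)) = (i : ℤ) - j := by ring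
    rwa [heq] at this
  have hne : ((i : ℤ) - j) ≠ 0 := by
    intro h; apply hij; omega
  have habs : |(i : ℤ) - j| < r := by
    rw [abs_lt]
    constructor <;> omega
  have hdvd' : (r : ℤ) ∣ |(i : ℤ) - j| := (dvd_abs (r:ℤ) _).mpr hdvd
  have hle : (r : ℤ) ≤ |(i : ℤ) - j| := Int.le_of_dvd (abs_pos.mpr hne) hdvd'
  omega
end

section
/- Let n, k, r be integers with r ≥ 2, k ≥ 1 and 2k ≤ n, and let 𝒜 ⊆ 𝒮_{n,k,r} be an intersecting family. Let 𝒜_0 = {A ∈ 𝒜 : A contains no pair with first coordinate 1}, and for i ∈ [r] let 𝒜′_i = {A \ {(1, i)} : A ∈ 𝒜, (1, i) ∈ A}. Let ℳ_0 = {M_A : A ∈ 𝒜_0} be the family of supports of members of 𝒜_0 (k-subsets of [2, n]), let 𝒩 = {[2, n] \ M : M ∈ ℳ_0}, and let ℬ = {{(x_1, a_1), …, (x_{k−1}, a_{k−1})} : {x_1, …, x_{k−1}} ∈ ∂_{k−1}(𝒩), a_1, …, a_{k−1} ∈ [r]}. Then the families 𝒜′_1, θ^1_r(𝒜′_2), …,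 θ^{r−1}_r(𝒜′_r), ℬ are pairwise disjoint. -/
open Finset

/-- `𝒜₀`: the members of `𝒜` containing no pair with first coordinate `1`. -/
def zeroFam (𝒜 : Finset (Finset (ℕ × ℕ))) : Finset (Finset (ℕ × ℕ)) :=
  𝒜.filter (fun A => ∀ p ∈ A, p.1 ≠ 1)

/-- `𝒩 = {[2, n] \ M : M ∈ ℳ₀}` where `ℳ₀` is the family of supports of members of `𝒜₀`. -/
def complFam (n : ℕ) (𝒜 : Finset (Finset (ℕ × ℕ))) : Finset (Finset ℕ) :=
  ((zeroFam 𝒜).image (fun A => A.image Prod.fst)).image (fun M => Finset.Icc 2 n \ M)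

/-- `ℬ`: all `r`-signed `(k−1)`-sets whose support lies in the `(k−1)`-shadow of `𝒩`. -/
def bFam (n k r : ℕ) (𝒜 : Finset (Finset (ℕ × ℕ))) : Finset (Finset (ℕ × ℕ)) :=
  (signedSets n (k - 1) r).filter
    (fun B => B.image Prod.fst ∈ mShadow (k - 1) (complFam n 𝒜))

lemma modStar_mod {r : ℕ} (hr : 0 < r) (x : ℤ) : (modStar x r : ℤ) % r = x % r := by
  unfold modStar
  split_ifs with h
  · simp [Int.emod_emod_of_dvd, Int.emod_eq_zero_of_dvd h]
  · rw [Int.toNat_of_nonneg (Int.emod_nonneg x (by exact_mod_cast hr.ne'))]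
    exact Int.emod_emod_of_dvd x dvd_rfl

lemma modStar_inj_s15 {r i j : ℕ} (hr : 0 < r) {x : ℤ}
    (hi : i ∈ Finset.Icc 1 r) (hj : j ∈ Finset.Icc 1 r)
    (h : modStar (x + i - 1) r = modStar (x + j - 1) r) : i = j := by
  simp only [Finset.mem_Icc] at hi hj
  have h1 := modStar_mod hr (x + i - 1)
  have h2 := modStar_mod hr (x + j - 1)
  rw [h] at h1
  have hmod : Int.ModEq r (x + i - 1) (x + j - 1) := h1.symm.trans h2
  have hd : (r : ℤ) ∣ ((j : ℤ) - i) := by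
    have := Int.ModEq.dvd hmod
    convert this using 1; ring
  have := Int.eq_zero_of_abs_lt_dvd hd (by rw [abs_lt]; omega)
  omega

lemma modStar_self_s15 {r a : ℕ} (ha : a ∈ Finset.Icc 1 r) : modStar a r = a := by
  simp only [Finset.mem_Icc] at ha
  unfold modStar
  split_ifs with h
  · rw [Int.natCast_dvd_natCast] at h
    exact Nat.le_antisymm (Nat.le_of_dvd (by omega) h) ha.2
  · rw [Int.natCast_dvd_natCast] at h
    have hlt : a < r := by
      rcases Nat.lt_or_ge a r with h' | h'
      · exact h'
      · exact absurd (Nat.le_antisymm ha.2 h') (by rintro h''; exact h (h'' ▸ dvd_rfl))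
    rw [← Int.natCast_mod, Int.toNat_natCast]
    exact Nat.mod_eq_of_lt hlt

lemma injFst {n k r : ℕ} {A : Finset (ℕ × ℕ)} (hA : A ∈ signedSets n k r) :
    ∀ p ∈ A, ∀ q ∈ A, p.1 = q.1 → p = q := by
  simp only [signedSets, mem_filter, mem_powerset] at hA
  have hinj : Set.InjOn Prod.fst (A : Set (ℕ × ℕ)) :=
    Finset.card_image_iff.mp (hA.2.2.trans hA.2.1.symm)
  intro p hp q hq h
  exact hinj (Finset.mem_coe.mpr hp) (Finset.mem_coe.mpr hq) h

lemma sndMem {n k r : ℕ} {A : Finset (ℕ × ℕ)} (hA : A ∈ signedSets n k r)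
    {p : ℕ × ℕ} (hp : p ∈ A) : p.2 ∈ Finset.Icc 1 r := by
  simp only [signedSets, mem_filter, mem_powerset] at hA
  exact (Finset.mem_product.mp (hA.1 hp)).2

lemma shifted_rep {n k r i : ℕ} {𝒜 : Finset (Finset (ℕ × ℕ))}
    (h𝒜 : 𝒜 ⊆ signedSets n k r) {C : Finset (ℕ × ℕ)}
    (hC : C ∈ shiftedFam 𝒜 r i) :
    ∃ A ∈ 𝒜, (1, i) ∈ A ∧ C = theta ((i : ℤ) - 1) r (A.erase (1, i)) := by
  unfold shiftedFam at hC
  split_ifs at hC with h1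
  · subst h1
    simp only [primeFam, mem_image, mem_filter] at hC
    obtain ⟨A, ⟨hA, hmem⟩, rfl⟩ := hC
    refine ⟨A, hA, hmem, ?_⟩
    have : theta (((1 : ℕ) : ℤ) - 1) r (A.erase (1, 1)) = (A.erase (1, 1)).image id := by
      apply Finset.image_congr
      intro p hp
      have h2 := sndMem (h𝒜 hA) (mem_of_mem_erase hp)
      simp only [id]
      have : ((p.2 : ℤ) + (((1 : ℕ) : ℤ) - 1)) = (p.2 : ℤ) := by push_cast; ring
      rw [this, modStar_self_s15 h2]
    rw [this, Finset.image_id]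
  · simp only [mem_image, primeFam, mem_filter] at hC
    obtain ⟨C', ⟨A, ⟨hA, hmem⟩, rfl⟩, rfl⟩ := hC
    exact ⟨A, hA, hmem, rfl⟩

theorem shifted_families_and_B_pairwise_disjoint (n k r : ℕ)
    (hr : 2 ≤ r) (hk : 1 ≤ k) (hkn : 2 * k ≤ n)
    (𝒜 : Finset (Finset (ℕ × ℕ))) (h𝒜 : 𝒜 ⊆ signedSets n k r)
    (hint : ∀ A ∈ 𝒜, ∀ B ∈ 𝒜, (A ∩ B).Nonempty) :
    (∀ i ∈ Finset.Icc 1 r, ∀ j ∈ Finset.Icc 1 r, i ≠ j →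
      shiftedFam 𝒜 r i ∩ shiftedFam 𝒜 r j = ∅) ∧
    (∀ i ∈ Finset.Icc 1 r, shiftedFam 𝒜 r i ∩ bFam n k r 𝒜 = ∅) := by
  have hr0 : 0 < r := by omega
  constructor
  · intro i hi j hj hij
    rw [Finset.eq_empty_iff_forall_notMem]
    intro C hC
    rw [mem_inter] at hC
    obtain ⟨A, hA, hiA, hCA⟩ := shifted_rep h𝒜 hC.1
    obtain ⟨B, hB, hjB, hCB⟩ := shifted_rep h𝒜 hC.2
    obtain ⟨p, hp⟩ := hint A hA B hB
    rw [mem_inter] at hp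
    have hp1 : p.1 ≠ 1 := by
      intro h1
      have e1 : p = (1, i) := injFst (h𝒜 hA) p hp.1 (1, i) hiA (by simp [h1])
      have e2 : p = (1, j) := injFst (h𝒜 hB) p hp.2 (1, j) hjB (by simp [h1])
      rw [e1] at e2
      exact hij (Prod.mk.injEq _ _ _ _ ▸ e2).2
    have hpB : p ∈ B.erase (1, j) :=
      mem_erase.mpr ⟨fun h => hp1 (by rw [h]), hp.2⟩
    have hmem : (p.1, modStar ((p.2 : ℤ) + ((j : ℤ) - 1)) r) ∈ C := by
      rw [hCB]; exact Finset.mem_image_of_mem _ hpB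
    rw [hCA] at hmem
    unfold theta at hmem
    rw [mem_image] at hmem
    obtain ⟨q, hq, heq⟩ := hmem
    rw [Prod.mk.injEq] at heq
    have hqp : q = p :=
      injFst (h𝒜 hA) q (mem_of_mem_erase hq) p hp.1 heq.1
    rw [hqp] at heq
    have heq2 : modStar ((p.2 : ℤ) + (i : ℤ) - 1) r = modStar ((p.2 : ℤ) + (j : ℤ) - 1) r := by
      simpa [add_sub_assoc] using heq.2
    exact hij (modStar_inj_s15 hr0 hi hj heq2)
  · intro i hi
    rw [Finset.eq_empty_iff_forall_notMem]
    intro C hC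
    rw [mem_inter] at hC
    obtain ⟨A, hA, hiA, hCA⟩ := shifted_rep h𝒜 hC.1
    have hB := hC.2
    simp only [bFam, mem_filter, mShadow, Finset.mem_sup] at hB
    obtain ⟨-, F, hF, hsub⟩ := hB
    simp only [complFam, mem_image, zeroFam, mem_filter] at hF
    obtain ⟨M, ⟨A0, ⟨hA0, hA0ne⟩, rfl⟩, rfl⟩ := hF
    rw [Finset.mem_powersetCard] at hsub
    obtain ⟨p, hp⟩ := hint A hA A0 hA0
    rw [mem_inter] at hp
    have hp1 : p.1 ≠ 1 := hA0ne p hp.2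
    have hpA : p ∈ A.erase (1, i) :=
      mem_erase.mpr ⟨fun h => hp1 (by rw [h]), hp.1⟩
    have hmem : (p.1, modStar ((p.2 : ℤ) + ((i : ℤ) - 1)) r) ∈ C := by
      rw [hCA]; exact Finset.mem_image_of_mem _ hpA
    have hfst : p.1 ∈ C.image Prod.fst := Finset.mem_image.mpr ⟨_, hmem, rfl⟩
    have := hsub.1 hfst
    rw [Finset.mem_sdiff] at this
    exact this.2 (Finset.mem_image_of_mem _ hp.2)
end
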